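/- arXiv:2504.18218 — 5 statements merged into one kernel-verified Lean document; each statement's English description precedes it below -/
import Mathlib

section
/- Let H be a finite simple graph whose maximum degree is at most d, where d ≥ 1, let v be a vertex of H, and let ℓ ≥ 1 be an integer. Then the number of sets T ⊆ V(H) with v ∈ T, |T| ≤ ℓ, and H[T] connected is at most d^{2ℓ-2} + 1. -/
attribute [local instance 10] Classical.propDecidable

/-- A trigraph: a finite simple graph whose edges are partitioned into black and red edges. -/
structure Trigraph (α : Type) where
  verts : Finset α
  black : α → α → Prop
  red : α → α → Prop
  black_symm : ∀ x y, black x y → black y x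
  red_symm : ∀ x y, red x y → red y x
  black_irrefl : ∀ x, ¬ black x x
  red_irrefl : ∀ x, ¬ red x x
  black_red_disjoint : ∀ x y, black x y → ¬ red x y
  black_mem : ∀ x y, black x y → x ∈ verts ∧ y ∈ verts
  red_mem : ∀ x y, red x y → x ∈ verts ∧ y ∈ verts

namespace Trigraph

/-- The red graph of a trigraph. -/
def redGraph {α : Type} (G : Trigraph α) : SimpleGraph α where
  Adj := G.red
  symm := ⟨fun x y h => G.red_symm x y h⟩
  loopless := ⟨fun x h => G.red_irrefl x h⟩

/-- The red degree of a vertex. -/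
noncomputable def redDegree {α : Type} (G : Trigraph α) (x : α) : ℕ :=
  Set.ncard {y | G.red x y}

end Trigraph

variable {α : Type} [DecidableEq α]

/-- `Contracts G G' u v w` : the trigraph `G'` is obtained from the trigraph `G` by
contracting the two distinct vertices `u, v` into the new vertex `w`. -/
def Contracts (G G' : Trigraph α) (u v w : α) : Prop :=
  u ∈ G.verts ∧ v ∈ G.verts ∧ u ≠ v ∧ w ∉ G.verts ∧
  G'.verts = insert w (G.verts \ {u, v}) ∧
  (∀ x ∈ G.verts \ {u, v}, (G'.black w x ↔ G.black u x ∧ G.black v x)) ∧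
  (∀ x ∈ G.verts \ {u, v},
    (G'.red w x ↔ (¬ (G.black u x ∧ G.black v x)) ∧
      (G.black u x ∨ G.red u x ∨ G.black v x ∨ G.red v x))) ∧
  (∀ x, x ∈ G.verts \ {u, v} → ∀ y, y ∈ G.verts \ {u, v} →
    ((G'.black x y ↔ G.black x y) ∧ (G'.red x y ↔ G.red x y)))

/-- A contraction sequence `(G = G₁, …, Gₙ)` of a graph `G` (a trigraph with no red edges),
together with the data of the contracted vertices `cu i, cv i` and the new vertex `cw i`
at each step `i ∈ [2, n]`. -/
structure ContractionSeq (α : Type) [DecidableEq α] (n : ℕ) where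
  seq : ℕ → Trigraph α
  cu : ℕ → α
  cv : ℕ → α
  cw : ℕ → α
  one_le : 1 ≤ n
  init_noRed : ∀ x y, ¬ (seq 1).red x y
  last_single : (seq n).verts.card = 1
  step : ∀ i, 2 ≤ i → i ≤ n → Contracts (seq (i - 1)) (seq i) (cu i) (cv i) (cw i)

namespace ContractionSeq

variable {n : ℕ}

/-- The contraction sequence has width `d`: every vertex of every trigraph in the
sequence has red degree at most `d`. -/
def HasWidth (C : ContractionSeq α n) (d : ℕ) : Prop :=
  ∀ i, 1 ≤ i → i ≤ n → ∀ x, (C.seq i).redDegree x ≤ d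

/-- The bag `β(u)` of a vertex `u` of `Gᵢ`: the set of vertices of `G = G₁`
contracted into `u`. -/
def bag (C : ContractionSeq α n) : ℕ → α → Finset α
  | 0, x => {x}
  | 1, x => {x}
  | i + 2, x =>
    if x = C.cw (i + 2) then bag C (i + 1) (C.cu (i + 2)) ∪ bag C (i + 1) (C.cv (i + 2))
    else bag C (i + 1) x

/-- `β(T)`, the union of the bags of the vertices in `T`. -/
def bags (C : ContractionSeq α n) (i : ℕ) (T : Finset α) : Finset α :=
  T.biUnion (C.bag i)

end ContractionSeq

variable {n : ℕ}

/-- A basic `i`-profile `(T, D)`. -/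
def IsBasicProfile (C : ContractionSeq α n) (k d i : ℕ) (T D : Finset α) : Prop :=
  T ⊆ (C.seq i).verts ∧ T.card ≤ k * (d + 1) ∧
  (SimpleGraph.induce (↑T : Set α) (C.seq i).redGraph).Connected ∧
  D ⊆ T ∧ D.card ≤ k

/-- `T' = (T \ {v}) ∪ {u₁, u₂}` where `v = cw i` is the new vertex of `Gᵢ` and
`u₁ = cu i`, `u₂ = cv i` are the vertices contracted into it. -/
def newT (C : ContractionSeq α n) (i : ℕ) (T : Finset α) : Finset α :=
  T.erase (C.cw i) ∪ {C.cu i, C.cv i}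

/-- `D' ⊆ T'` is compatible with the basic `i`-profile `(T, D)`. -/
def DCompat (C : ContractionSeq α n) (k i : ℕ) (T D D' : Finset α) : Prop :=
  D' ⊆ newT C i T ∧
  D.erase (C.cw i) = (D'.erase (C.cu i)).erase (C.cv i) ∧
  D'.card ≤ k ∧
  (C.cw i ∈ D ↔ (C.cu i ∈ D' ∨ C.cv i ∈ D'))

/-- A `D'`-decomposition `{(T₁, D₁), …, (Tₘ, Dₘ)}` of the basic `i`-profile `(T, D)`. -/
def IsDDecomp (C : ContractionSeq α n) (k d i : ℕ) (T D D' : Finset α)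
    (m : ℕ) (Tj Dj : Fin m → Finset α) : Prop :=
  (∀ j, IsBasicProfile C k d (i - 1) (Tj j) (Dj j)) ∧
  (∀ j ℓ, j ≠ ℓ → Disjoint (Tj j) (Tj ℓ)) ∧
  newT C i T = Finset.univ.biUnion Tj ∧
  D' = Finset.univ.biUnion Dj ∧
  DCompat C k i T D D' ∧
  (∀ j ℓ, j ≠ ℓ → ∀ x ∈ Tj j, ∀ y ∈ Dj ℓ, ¬ (C.seq (i - 1)).red x y)

/-- An extended `i`-profile `(T, D, M, f)`; the function `f : T → [0, k]` is modelled as a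
function `f : α → ℕ` vanishing outside `T`. -/
def IsExtProfile (C : ContractionSeq α n) (k d i : ℕ) (T D M : Finset α) (f : α → ℕ) : Prop :=
  IsBasicProfile C k d i T D ∧ M ⊆ T ∧
  (∀ u, u ∉ T → f u = 0) ∧
  (∀ u ∈ T, f u ≤ k) ∧
  (∑ u ∈ T, f u) ≤ k ∧
  (∀ u ∈ T, f u ≤ (C.bag i u).card) ∧
  D = T.filter (fun u => f u ≠ 0)

/-- A solution of an extended `i`-profile `(T, D, M, f)`. -/
def IsSolution (C : ContractionSeq α n) (i : ℕ) (T : Finset α) (f : α → ℕ)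
    (S : Finset α) : Prop :=
  S ⊆ C.bags i T ∧ ∀ u ∈ T, f u = (S ∩ C.bag i u).card

/-- The closed neighborhood `N[S]` of `S` in the graph `G = G₁`. -/
def closedNbhd (C : ContractionSeq α n) (S : Finset α) : Set α :=
  ↑S ∪ {x | ∃ y ∈ S, (C.seq 1).black x y}

/-- The dominating-set-value `|N[S] ∩ β(M)|` of a solution `S`. -/
noncomputable def dsValue (C : ContractionSeq α n) (i : ℕ) (M S : Finset α) : ℕ :=
  Set.ncard (closedNbhd C S ∩ ↑(C.bags i M))

/-- The vertex-cover-value of a solution `S`: the number of edges of `G` with one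
endpoint in `S` and the other endpoint in `β(T)`. -/
noncomputable def vcValue (C : ContractionSeq α n) (i : ℕ) (T S : Finset α) : ℕ :=
  Set.ncard {e : Sym2 α | ∃ x y, e = s(x, y) ∧ (C.seq 1).black x y ∧ x ∈ S ∧ y ∈ C.bags i T}

/-- The function `f' : T' → [0, k]` is compatible with the extended `i`-profile
`(T, D, M, f)`. -/
def FCompat (C : ContractionSeq α n) (k i : ℕ) (T : Finset α) (f f' : α → ℕ) : Prop :=
  (∀ u, u ∉ newT C i T → f' u = 0) ∧
  (∀ u ∈ newT C i T, f' u ≤ k) ∧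
  f (C.cw i) = f' (C.cu i) + f' (C.cv i) ∧
  f' (C.cu i) ≤ (C.bag (i - 1) (C.cu i)).card ∧
  f' (C.cv i) ≤ (C.bag (i - 1) (C.cv i)).card ∧
  (∀ u ∈ T.erase (C.cw i), f' u = f u)

/-- `D' = {u ∈ T' : f'(u) ≠ 0}`. -/
def Dset (C : ContractionSeq α n) (i : ℕ) (T : Finset α) (f' : α → ℕ) : Finset α :=
  (newT C i T).filter (fun u => f' u ≠ 0)

/-- `M-hat = (M \ {v}) ∪ {u₁, u₂}` if `v ∈ M`, and `M-hat = M` otherwise. -/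
def Mhat (C : ContractionSeq α n) (i : ℕ) (M : Finset α) : Finset α :=
  if C.cw i ∈ M then M.erase (C.cw i) ∪ {C.cu i, C.cv i} else M

/-- `M' = {u ∈ M-hat : u has no black neighbor in D' in G_{i-1}}`. -/
noncomputable def Mset (C : ContractionSeq α n) (i : ℕ) (M D' : Finset α) : Finset α :=
  (Mhat C i M).filter (fun u => ¬ ∃ w ∈ D', (C.seq (i - 1)).black u w)

/-- An `f'`-decomposition `{(Tⱼ, Dⱼ, Mⱼ, fⱼ) : j ∈ [m]}` of the extended `i`-profile
`(T, D, M, f)`. -/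
def IsFDecomp (C : ContractionSeq α n) (k d i : ℕ) (T D M : Finset α) (f' : α → ℕ)
    (m : ℕ) (Tj Dj Mj : Fin m → Finset α) (fj : Fin m → α → ℕ) : Prop :=
  (∀ j, IsExtProfile C k d (i - 1) (Tj j) (Dj j) (Mj j) (fj j)) ∧
  (∀ j, ∀ u ∈ Tj j, fj j u = f' u) ∧
  Dset C i T f' = Finset.univ.biUnion Dj ∧
  Mset C i M (Dset C i T f') = Finset.univ.biUnion Mj ∧
  IsDDecomp C k d i T D (Dset C i T f') m Tj Dj

/-- The adjacency relation of the expanded graph `G_π` of a virtual profile with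
context `T`, virtual vertices `Vv` and virtual edges `E`. -/
def expAdj (C : ContractionSeq α n) (i : ℕ) (T Vv : Finset α) (E : Finset (Sym2 α))
    (x y : α) : Prop :=
  (x ∈ C.bags i T ∧ y ∈ C.bags i T ∧ (C.seq 1).black x y) ∨
  (x ∈ Vv ∧ y ∈ Vv ∧ s(x, y) ∈ E) ∨
  (y ∈ Vv ∧ ∃ u ∈ T, x ∈ C.bag i u ∧ s(u, y) ∈ E) ∨
  (x ∈ Vv ∧ ∃ u ∈ T, y ∈ C.bag i u ∧ s(u, x) ∈ E)

/-- A virtual `i`-profile `(T, D, V, E, f, H)`.  The graph `H` is given by its labeling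
`h : [k] → V(H)` (so `V(H)` is the range of `h`) and its edge set `HE`. -/
def IsVirtualProfile (C : ContractionSeq α n) (k d i : ℕ)
    (T D Vv : Finset α) (E : Finset (Sym2 α)) (f h : Fin k → α)
    (HE : Finset (Sym2 α)) : Prop :=
  IsBasicProfile C k d i T D ∧
  Vv.card ≤ k ∧
  (∀ x ∈ Vv, ∀ j, 1 ≤ j → j ≤ n → x ∉ (C.seq j).verts) ∧
  (∀ e ∈ E, ∃ u w, e = s(u, w) ∧ u ∈ Vv ∪ T ∧ w ∈ Vv) ∧
  (∀ a, f a ∈ D ∪ Vv) ∧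
  (∀ x ∈ D ∪ Vv, ∃ a, f a = x) ∧
  (∀ u ∈ D, (Finset.univ.filter (fun a => f a = u)).card ≤ (C.bag i u).card) ∧
  (∀ e ∈ HE, ¬ e.IsDiag ∧ ∀ x ∈ e, ∃ a, h a = x)

/-- A solution `(s₁, …, s_k)` of a virtual `i`-profile. -/
def IsVSolution (C : ContractionSeq α n) (i k : ℕ)
    (T D Vv : Finset α) (E : Finset (Sym2 α)) (f h : Fin k → α) (HE : Finset (Sym2 α))
    (sol : Fin k → α) : Prop :=
  (∀ a, (f a ∈ Vv → sol a = f a) ∧ (f a ∈ D → sol a ∈ C.bag i (f a))) ∧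
  (∀ a b, sol a = sol b ↔ h a = h b) ∧
  (∀ a b, expAdj C i T Vv E (sol a) (sol b) ↔ s(h a, h b) ∈ HE)

/-- Quantifier-free first-order formulas in the language of graphs with free variables
`x₁, …, x_k, y` (the variable `y` being the last one). -/
inductive QF (k : ℕ) : Type where
  | eq : Fin (k + 1) → Fin (k + 1) → QF k
  | adj : Fin (k + 1) → Fin (k + 1) → QF k
  | not : QF k → QF k
  | and : QF k → QF k → QF k
  | or : QF k → QF k → QF k

/-- Satisfaction of a quantifier-free formula under an adjacency relation `A` and a
valuation `val` of the variables. -/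
def QF.Sat {β : Type} {k : ℕ} (A : β → β → Prop) (val : Fin (k + 1) → β) : QF k → Prop
  | .eq a b => val a = val b
  | .adj a b => A (val a) (val b)
  | .not φ => ¬ QF.Sat A val φ
  | .and φ ψ => QF.Sat A val φ ∧ QF.Sat A val ψ
  | .or φ ψ => QF.Sat A val φ ∨ QF.Sat A val ψ

/-- The value `Σ_{α ∈ I} |{u ∈ β(T) : G_π ⊨ ψ_α(s₁, …, s_k, u)}|` of a solution of a
virtual `i`-profile. -/
noncomputable def vValue {I : Type} [Fintype I] {k : ℕ} (ψ : I → QF k)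
    (C : ContractionSeq α n) (i : ℕ) (T Vv : Finset α) (E : Finset (Sym2 α))
    (sol : Fin k → α) : ℕ :=
  ∑ a : I, Set.ncard {u : α | u ∈ C.bags i T ∧
    QF.Sat (expAdj C i T Vv E) (Fin.snoc sol u) (ψ a)}

/-- The function `f' : [k] → T' ∪ V` is compatible with the virtual `i`-profile. -/
def VFCompat (C : ContractionSeq α n) (i k : ℕ) (f f' : Fin k → α) : Prop :=
  ∀ a, (f a = C.cw i → (f' a = C.cu i ∨ f' a = C.cv i)) ∧ (f a ≠ C.cw i → f' a = f a)

/-- `E' = {uw ∈ E : u, w ∈ T' ∪ V} ∪ {u₁w, u₂w : vw ∈ E}`. -/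
def Eprime (C : ContractionSeq α n) (i : ℕ) (T Vv : Finset α) (E : Finset (Sym2 α)) :
    Set (Sym2 α) :=
  {e | e ∈ E ∧ ∀ x ∈ e, x ∈ newT C i T ∪ Vv} ∪
  {e | ∃ w, s(C.cw i, w) ∈ E ∧ (e = s(C.cu i, w) ∨ e = s(C.cv i, w))}

/-- `D' = range(f') ∩ T'`. -/
noncomputable def rangeD {k : ℕ} (C : ContractionSeq α n) (i : ℕ) (T : Finset α)
    (f' : Fin k → α) : Finset α :=
  (newT C i T).filter (fun u => ∃ a, f' a = u)

/-- An `f'`-decomposition `{(Tⱼ, Dⱼ, Vⱼ, Eⱼ, fⱼ, H) : j ∈ [m]}` of the virtual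
`i`-profile `(T, D, V, E, f, H)`. -/
def IsVDecomp (C : ContractionSeq α n) (k d i : ℕ)
    (T D Vv : Finset α) (E : Finset (Sym2 α)) (f h : Fin k → α) (HE : Finset (Sym2 α))
    (f' : Fin k → α) (m : ℕ) (Tj Dj Vj : Fin m → Finset α)
    (Ej : Fin m → Finset (Sym2 α)) (fj : Fin m → Fin k → α) : Prop :=
  IsDDecomp C k d i T D (rangeD C i T f') m Tj Dj ∧
  (∀ j, IsVirtualProfile C k d (i - 1) (Tj j) (Dj j) (Vj j) (Ej j) (fj j) h HE) ∧
  (∀ j, Vj j =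
    Vv ∪ (Finset.univ.filter (fun a => f' a ∈ rangeD C i T f' \ Dj j)).image h) ∧
  (∀ j a, (f' a ∈ Dj j ∪ Vv → fj j a = f' a) ∧
          (f' a ∈ rangeD C i T f' \ Dj j → fj j a = h a)) ∧
  (∀ j e, e ∈ Ej j ↔
    ((e ∈ Eprime C i T Vv E ∧ ∀ x ∈ e, x ∈ Vv ∪ Tj j) ∨
     (∃ u a, e = s(u, h a) ∧ u ∈ Vv ∪ Tj j ∧ f' a ∈ rangeD C i T f' \ Dj j ∧
        (s(u, f' a) ∈ Eprime C i T Vv E ∨ (C.seq (i - 1)).black u (f' a))) ∨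
     (∃ a b, e = s(h a, h b) ∧ s(h a, h b) ∈ HE ∧
        f' a ∈ rangeD C i T f' \ Dj j ∧ f' b ∈ rangeD C i T f' \ Dj j)))

/-- `⊕_{j ∈ [m]} sⱼ = s¹ ⊕ (s² ⊕ ( … ))`, where the `a`-th entry of `s¹ ⊕ s²` is
`s¹ a` if `f₁ a ∈ D₁` and `s² a` otherwise. -/
noncomputable def bigOplus {k : ℕ} [Nonempty α] :
    (m : ℕ) → (Fin m → Fin k → α) → (Fin m → Fin k → α) → (Fin m → Finset α) →
      Fin k → α
  | 0, _, _, _ => fun _ => Classical.arbitrary α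
  | 1, sol, _, _ => sol 0
  | m + 2, sol, f, D => fun a =>
      if f 0 a ∈ D 0 then sol 0 a
      else bigOplus (m + 1) (fun j => sol j.succ) (fun j => f j.succ)
        (fun j => D j.succ) a



set_option linter.unusedSectionVars false
namespace CCSAux

open SimpleGraph List

variable {V : Type} [Fintype V] [DecidableEq V]

lemma reach_induce {H : SimpleGraph V} {s : Set V} :
    ∀ {x y : V} (p : H.Walk x y), (∀ z ∈ p.support, z ∈ s) →
      ∀ (hx : x ∈ s) (hy : y ∈ s), (SimpleGraph.induce s H).Reachable ⟨x, hx⟩ ⟨y, hy⟩ := by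
  intro x y p
  induction p with
  | nil => intro _ hx hy; exact SimpleGraph.Reachable.refl _
  | @cons a b c h q ih =>
    intro hp ha hc
    have hb : b ∈ s := hp b (by simp [SimpleGraph.Walk.support_cons,
      SimpleGraph.Walk.start_mem_support])
    have hadj : (SimpleGraph.induce s H).Adj ⟨a, ha⟩ ⟨b, hb⟩ := by
      simpa using h
    exact hadj.reachable.trans
      (ih (fun z hz => hp z (by simp [SimpleGraph.Walk.support_cons, hz])) hb hc)

lemma induce_connected_of_walks {H : SimpleGraph V} {s : Set V} {v : V} (hv : v ∈ s)
    (hw : ∀ x ∈ s, ∃ p : H.Walk v x, ∀ z ∈ p.support, z ∈ s) :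
    (SimpleGraph.induce s H).Connected := by
  rw [SimpleGraph.connected_iff]
  refine ⟨?_, ⟨⟨v, hv⟩⟩⟩
  rintro ⟨x, hx⟩ ⟨y, hy⟩
  obtain ⟨p, hp⟩ := hw x hx
  obtain ⟨q, hq⟩ := hw y hy
  exact (reach_induce p hp hv hx).symm.trans (reach_induce q hq hv hy)

lemma exists_adj_of_walk {H : SimpleGraph V} {T : Finset V} :
    ∀ {x y : ↥(↑T : Set V)} (_ : (SimpleGraph.induce (↑T : Set V) H).Walk x y),
      x ≠ y → ∃ w ∈ T, H.Adj x.val w := by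
  intro x y p hxy
  cases p with
  | nil => exact absurd rfl hxy
  | @cons _ b _ h q =>
    have : H.Adj x.val b.val := by simpa using h
    exact ⟨b.val, b.2, this⟩

lemma exists_adj_mem {H : SimpleGraph V} {T : Finset V}
    (hT : (SimpleGraph.induce (↑T : Set V) H).Connected)
    {x : V} (hx : x ∈ T) (h2 : 2 ≤ T.card) : ∃ w ∈ T, H.Adj x w := by
  obtain ⟨y, hy, hyx⟩ := Finset.exists_mem_ne (s := T) (by omega) x
  obtain ⟨p⟩ := hT ⟨x, hx⟩ ⟨y, hy⟩
  exact exists_adj_of_walk p (by simp [Subtype.ext_iff]; exact fun h => hyx h.symm)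


lemma exists_erase_connected {H : SimpleGraph V} {T : Finset V} {v : V}
    (hT : (SimpleGraph.induce (↑T : Set V) H).Connected) (hv : v ∈ T) (h2 : 2 ≤ T.card) :
    ∃ u ∈ T, u ≠ v ∧ (SimpleGraph.induce (↑(T.erase u) : Set V) H).Connected := by
  set G' := SimpleGraph.induce (↑T : Set V) H with hG'
  have hvT : (v : V) ∈ (↑T : Set V) := hv
  obtain ⟨u', -, hu'⟩ := Finset.exists_max_image (Finset.univ : Finset ↥(↑T : Set V))
    (fun x => G'.dist ⟨v, hvT⟩ x) ⟨⟨v, hvT⟩, Finset.mem_univ _⟩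
  obtain ⟨y, hy, hyv⟩ := Finset.exists_mem_ne (s := T) (by omega) v
  have hposy : 0 < G'.dist ⟨v, hvT⟩ ⟨y, hy⟩ :=
    hT.pos_dist_of_ne (by simp [Subtype.ext_iff]; exact fun h => hyv h.symm)
  have hpos : 0 < G'.dist ⟨v, hvT⟩ u' := lt_of_lt_of_le hposy (hu' _ (Finset.mem_univ _))
  have huv : (u' : V) ≠ v := by
    intro h
    have : u' = ⟨v, hvT⟩ := Subtype.ext h
    rw [this, SimpleGraph.dist_self] at hpos
    omega
  refine ⟨u'.val, u'.2, huv, ?_⟩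
  have hvmem : v ∈ T.erase u'.val := Finset.mem_erase.2 ⟨fun h => huv h.symm, hv⟩
  apply induce_connected_of_walks hvmem
  intro x hx
  obtain ⟨hxu, hxT⟩ := Finset.mem_erase.1 hx
  have hxT' : (x : V) ∈ (↑T : Set V) := hxT
  obtain ⟨p, hp⟩ := hT.exists_walk_length_eq_dist ⟨v, hvT⟩ ⟨x, hxT'⟩
  have hns : u' ∉ p.support := by
    intro hmem
    have hsum : (p.takeUntil u' hmem).length + (p.dropUntil u' hmem).length = p.length := by
      rw [← SimpleGraph.Walk.length_append, SimpleGraph.Walk.take_spec]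
    have h1 : G'.dist ⟨v, hvT⟩ u' ≤ (p.takeUntil u' hmem).length :=
      SimpleGraph.dist_le _
    have h2' : (p.dropUntil u' hmem).length ≠ 0 := by
      intro h0
      exact hxu (congrArg Subtype.val (SimpleGraph.Walk.eq_of_length_eq_zero h0)).symm
    have hmax : G'.dist ⟨v, hvT⟩ ⟨x, hxT'⟩ ≤ G'.dist ⟨v, hvT⟩ u' := hu' _ (Finset.mem_univ _)
    omega
  -- map walk to ambient graph
  let pm := p.map (SimpleGraph.Embedding.induce (↑T : Set V)).toHom
  refine ⟨pm, ?_⟩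
  intro z hz
  replace hz : z ∈ (p.map (SimpleGraph.Embedding.induce (↑T : Set V)).toHom).support := hz
  rw [SimpleGraph.Walk.support_map] at hz
  obtain ⟨z', hz', rfl⟩ := List.mem_map.1 hz
  refine Finset.mem_erase.2 ⟨?_, z'.2⟩
  intro h
  exact hns (Subtype.ext h ▸ hz')

lemma chain'_insert_detour {R : V → V → Prop} {s t' : List V} {w u : V}
    (hch : List.Chain' R (s ++ w :: t')) (h1 : R w u) (h2 : R u w) :
    List.Chain' R (s ++ w :: u :: w :: t') := by
  simp only [List.Chain'] at hch ⊢
  rw [List.isChain_append] at hch ⊢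
  refine ⟨hch.1, ?_, ?_⟩
  · exact List.isChain_cons_cons.2 ⟨h1, List.isChain_cons_cons.2 ⟨h2, hch.2.1⟩⟩
  · simpa using hch.2.2

lemma exists_cover_list {H : SimpleGraph V} (v : V) :
    ∀ t (T : Finset V), T.card = t → v ∈ T →
      (SimpleGraph.induce (↑T : Set V) H).Connected →
      ∃ l : List V, l.Chain' H.Adj ∧ l.head? = some v ∧ l.length = 2 * t - 1 ∧
        l.toFinset = T := by
  intro t
  induction t using Nat.strong_induction_on with
  | _ t ih =>
    intro T hcard hv hconn
    rcases Nat.lt_or_ge t 2 with hlt | h2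
    · have h1 : T.card = 1 := by
        have : 1 ≤ T.card := Finset.card_pos.2 ⟨v, hv⟩
        omega
      obtain ⟨a, ha⟩ := Finset.card_eq_one.1 h1
      have hav : a = v := by
        rw [ha, Finset.mem_singleton] at hv; exact hv.symm
      subst hav
      have ht1 : t = 1 := by omega
      exact ⟨[a], List.isChain_singleton a, rfl, by simp [ht1], by simp [ha]⟩
    · obtain ⟨u, hu, huv, hconn'⟩ := exists_erase_connected hconn hv (hcard ▸ h2)
      have hv' : v ∈ T.erase u := Finset.mem_erase.2 ⟨fun h => huv h.symm, hv⟩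
      obtain ⟨w, hw, hadj⟩ := exists_adj_mem hconn hu (hcard ▸ h2)
      have hw' : w ∈ T.erase u := Finset.mem_erase.2 ⟨fun h => (H.irrefl (h ▸ hadj)), hw⟩
      have hcard' : (T.erase u).card = t - 1 := by
        rw [Finset.card_erase_of_mem hu]; omega
      obtain ⟨l, hch, hhd, hlen, hfin⟩ := ih (t - 1) (by omega) (T.erase u) hcard' hv' hconn'
      have hwl : w ∈ l := List.mem_toFinset.1 (by rw [hfin]; exact hw')
      obtain ⟨s, t', rfl⟩ := List.append_of_mem hwl
      refine ⟨s ++ w :: u :: w :: t', chain'_insert_detour hch hadj.symm hadj, ?_, ?_, ?_⟩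
      · cases s with
        | nil => simpa using hhd
        | cons a s₁ => simpa using hhd
      · have := hlen
        simp only [List.length_append, List.length_cons] at this ⊢
        omega
      · have hmem : ∀ a, a ∈ (s ++ w :: u :: w :: t').toFinset ↔
            a = u ∨ a ∈ (s ++ w :: t').toFinset := by
          intro a
          simp only [List.mem_toFinset, List.mem_append, List.mem_cons]
          tauto
        ext a
        rw [hmem a, hfin]
        by_cases hau : a = u
        · subst hau; simp [hu]
        · simp [Finset.mem_erase, hau]

lemma pad_list {H : SimpleGraph V} {v u : V} (hadj : H.Adj v u) :
    ∀ (k : ℕ) (l : List V), l.Chain' H.Adj → l.head? = some v → u ∈ l.toFinset →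
      ∃ L : List V, L.Chain' H.Adj ∧ L.head? = some v ∧ L.length = l.length + 2 * k ∧
        L.toFinset = l.toFinset
  | 0, l, hch, hhd, hu => ⟨l, hch, hhd, by omega, rfl⟩
  | k + 1, l, hch, hhd, hu => by
    obtain ⟨L, hch', hhd', hlen', hfin'⟩ := pad_list hadj k l hch hhd hu
    cases L with
    | nil => simp at hhd'
    | cons a L₁ =>
      have hav : a = v := by simpa using hhd'
      subst hav
      refine ⟨a :: u :: a :: L₁, ?_, rfl, by simp_all; omega, ?_⟩
      · exact List.isChain_cons_cons.2 ⟨hadj, List.isChain_cons_cons.2 ⟨hadj.symm, hch'⟩⟩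
      · have hu' : u ∈ (a :: L₁).toFinset := by rw [hfin']; exact hu
        calc (a :: u :: a :: L₁).toFinset
            = insert a (insert u (insert a L₁.toFinset)) := by simp
          _ = insert u (insert a (insert a L₁.toFinset)) := Finset.insert_comm a u _
          _ = insert u (insert a L₁.toFinset) := by rw [Finset.insert_idem]
          _ = insert u (a :: L₁).toFinset := by rw [List.toFinset_cons]
          _ = (a :: L₁).toFinset := Finset.insert_eq_self.2 hu'
          _ = l.toFinset := hfin'

def walkFinset (H : SimpleGraph V) [DecidableRel H.Adj] : V → ℕ → Finset (List V)
  | _, 0 => {[]}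
  | x, m + 1 => (H.neighborFinset x).biUnion fun y => (walkFinset H y m).image (List.cons y)

lemma mem_walkFinset {H : SimpleGraph V} [DecidableRel H.Adj] :
    ∀ (m : ℕ) (x : V) (l : List V),
      l ∈ walkFinset H x m ↔ (x :: l).Chain' H.Adj ∧ l.length = m
  | 0, x, l => by
    simp [walkFinset, List.length_eq_zero_iff, List.isChain_cons, List.Chain', eq_comm]
    intro h; subst h; simp
  | m + 1, x, l => by
    simp only [walkFinset, Finset.mem_biUnion, Finset.mem_image,
      SimpleGraph.mem_neighborFinset]
    constructor
    · rintro ⟨y, hy, l', hl', rfl⟩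
      rw [mem_walkFinset] at hl'
      exact ⟨List.isChain_cons_cons.2 ⟨hy, hl'.1⟩, by simp [hl'.2]⟩
    · rintro ⟨hch, hlen⟩
      cases l with
      | nil => simp at hlen
      | cons y l' =>
        simp only [List.Chain', List.isChain_cons_cons] at hch
        exact ⟨y, hch.1, l', (mem_walkFinset m y l').2 ⟨hch.2, by simpa using hlen⟩, rfl⟩

lemma card_walkFinset_le {H : SimpleGraph V} [DecidableRel H.Adj] {d : ℕ}
    (hdeg : ∀ x, H.degree x ≤ d) :
    ∀ (m : ℕ) (x : V), (walkFinset H x m).card ≤ d ^ m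
  | 0, x => by simp [walkFinset]
  | m + 1, x => by
    calc (walkFinset H x (m + 1)).card
        ≤ ∑ y ∈ H.neighborFinset x, ((walkFinset H y m).image (List.cons y)).card :=
          Finset.card_biUnion_le
      _ ≤ ∑ y ∈ H.neighborFinset x, d ^ m := by
          refine Finset.sum_le_sum fun y _ => ?_
          exact Finset.card_image_le.trans (card_walkFinset_le hdeg m y)
      _ = H.degree x * d ^ m := by rw [Finset.sum_const, smul_eq_mul, SimpleGraph.card_neighborFinset_eq_degree]
      _ ≤ d * d ^ m := Nat.mul_le_mul_right _ (hdeg x)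
      _ = d ^ (m + 1) := by rw [pow_succ]; ring
end CCSAux

/-- In a finite simple graph of maximum degree at most `d ≥ 1`, the
number of connected vertex subsets of size at most `ℓ ≥ 1` containing a fixed vertex `v`
is at most `d^(2ℓ-2) + 1`. -/
theorem card_connected_subsets_le {V : Type} [Fintype V] [DecidableEq V]
    (H : SimpleGraph V) [DecidableRel H.Adj] (d ℓ : ℕ) (hd : 1 ≤ d) (hℓ : 1 ≤ ℓ)
    (hdeg : ∀ v, H.degree v ≤ d) (v : V) :
    Set.ncard {T : Finset V | v ∈ T ∧ T.card ≤ ℓ ∧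
        (SimpleGraph.induce (↑T : Set V) H).Connected}
      ≤ d ^ (2 * ℓ - 2) + 1 := by
  classical
  set S' : Set (Finset V) := {T : Finset V | (v ∈ T ∧ T.card ≤ ℓ ∧
      (SimpleGraph.induce (↑T : Set V) H).Connected) ∧ 2 ≤ T.card} with hS'
  have hsub : {T : Finset V | v ∈ T ∧ T.card ≤ ℓ ∧
      (SimpleGraph.induce (↑T : Set V) H).Connected} ⊆ insert ({v} : Finset V) S' := by
    intro T hT
    by_cases h : 2 ≤ T.card
    · exact Set.mem_insert_of_mem _ ⟨hT, h⟩
    · obtain ⟨hv, -, -⟩ := hT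
      have h1 : T.card = 1 := by
        have := Finset.card_pos.2 ⟨v, hv⟩
        omega
      obtain ⟨a, ha⟩ := Finset.card_eq_one.1 h1
      have hav : a = v := by
        rw [ha, Finset.mem_singleton] at hv; exact hv.symm
      exact Set.mem_insert_iff.2 (Or.inl (by rw [ha, hav]))
  have key : ∀ T ∈ S', ∃ l : List V, l ∈ CCSAux.walkFinset H v (2 * ℓ - 2) ∧
      T = (v :: l).toFinset := by
    rintro T ⟨⟨hv, hcard, hconn⟩, h2c⟩
    obtain ⟨l, hch, hhd, hlen, hfin⟩ := CCSAux.exists_cover_list v T.card T rfl hv hconn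
    obtain ⟨u, hu, hadj⟩ := CCSAux.exists_adj_mem hconn hv h2c
    have huT : u ∈ l.toFinset := by rw [hfin]; exact hu
    obtain ⟨L, hch', hhd', hlen', hfin'⟩ :=
      CCSAux.pad_list hadj (ℓ - T.card) l hch hhd huT
    cases L with
    | nil => simp at hhd'
    | cons a L' =>
      have hav : a = v := by simpa using hhd'
      subst hav
      refine ⟨L', (CCSAux.mem_walkFinset _ _ _).2 ⟨hch', ?_⟩, ?_⟩
      · simp only [List.length_cons] at hlen'
        omega
      · rw [← hfin, ← hfin']
  have h2 : S'.ncard ≤ d ^ (2 * ℓ - 2) := by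
    choose! f hf1 hf2 using key
    have hle := Set.ncard_le_ncard_of_injOn f
      (fun T hT => (Finset.mem_coe.2 (hf1 T hT) :
        f T ∈ (↑(CCSAux.walkFinset H v (2 * ℓ - 2)) : Set (List V))))
      (fun T1 h1 T2 h2c heq => by rw [hf2 T1 h1, hf2 T2 h2c, heq])
      (Finset.finite_toSet _)
    rw [Set.ncard_coe_finset] at hle
    exact hle.trans (CCSAux.card_walkFinset_le hdeg _ _)
  have h1 := Set.ncard_le_ncard hsub (Set.toFinite _)
  have h3 := Set.ncard_insert_le ({v} : Finset V) S'
  omega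
end

section
/- Let G be a graph with a contraction sequence (G = G_1, ..., G_n) of width d and let k be a natural number. Let i in [2, n], let v be the unique vertex of V(G_i) \ V(G_{i-1}), let u_1, u_2 be the two vertices of V(G_{i-1}) \ V(G_i) contracted into v, let π = (T, D) be a basic i-profile with v in T, let T' = (T \ {v}) ∪ {u_1, u_2}, and let D' ⊆ T' be compatible with π. Then there exists a D'-decomposition of π containing at most d + 2 basic (i-1)-profiles. -/
attribute [local instance 10] Classical.propDecidable

variable {α : Type} [DecidableEq α]

variable {n : ℕ}

set_option linter.unusedSectionVars false
set_option linter.unusedVariables false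

namespace BDaux

variable {α : Type} [DecidableEq α]

/-- step within a finset -/
def stepIn (r : α → α → Prop) (S : Finset α) (x y : α) : Prop :=
  x ∈ S ∧ y ∈ S ∧ r x y

/-- reachability within a finset -/
def reach (r : α → α → Prop) (S : Finset α) (x y : α) : Prop :=
  Relation.ReflTransGen (stepIn r S) x y

variable {r : α → α → Prop} {S : Finset α}

lemma reach_mono {S' : Finset α} (hSS : S ⊆ S') {x y : α} (h : reach r S x y) :
    reach r S' x y := by
  induction h with
  | refl => exact Relation.ReflTransGen.refl
  | tail _ hstep ih =>
      exact ih.tail ⟨hSS hstep.1, hSS hstep.2.1, hstep.2.2⟩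

lemma reach_symm (hr : ∀ x y, r x y → r y x) {x y : α} (h : reach r S x y) :
    reach r S y x := by
  induction h with
  | refl => exact Relation.ReflTransGen.refl
  | tail _ hstep ih =>
      exact Relation.ReflTransGen.head ⟨hstep.2.1, hstep.1, hr _ _ hstep.2.2⟩ ih

lemma reach_trans {x y z : α} (h : reach r S x y) (h2 : reach r S y z) :
    reach r S x z := Relation.ReflTransGen.trans h h2

/-- The connected component of `x` within `S`. -/
noncomputable def comp (r : α → α → Prop) (S : Finset α) (x : α) : Finset α :=
  S.filter (reach r S x)

lemma comp_subset : comp r S x ⊆ S := Finset.filter_subset _ _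

lemma mem_comp {x y : α} : y ∈ comp r S x ↔ y ∈ S ∧ reach r S x y :=
  Finset.mem_filter

lemma mem_comp_self {x : α} (hx : x ∈ S) : x ∈ comp r S x :=
  mem_comp.2 ⟨hx, Relation.ReflTransGen.refl⟩

lemma comp_eq_of_mem (hr : ∀ x y, r x y → r y x) {x y : α}
    (hy : y ∈ comp r S x) : comp r S y = comp r S x := by
  rcases mem_comp.1 hy with ⟨hyS, hxy⟩
  ext z
  simp only [mem_comp]
  constructor
  · rintro ⟨hz, hyz⟩; exact ⟨hz, reach_trans hxy hyz⟩
  · rintro ⟨hz, hxz⟩; exact ⟨hz, reach_trans (reach_symm hr hxy) hxz⟩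

lemma step_mem_comp (hr : ∀ x y, r x y → r y x) {x y : α} (hx : x ∈ S) (hy : y ∈ S)
    (hxy : r x y) : y ∈ comp r S x :=
  mem_comp.2 ⟨hy, Relation.ReflTransGen.single ⟨hx, hy, hxy⟩⟩

lemma comp_disjoint (hr : ∀ x y, r x y → r y x) {x y : α}
    (h : comp r S x ≠ comp r S y) : Disjoint (comp r S x) (comp r S y) := by
  rw [Finset.disjoint_left]
  intro z hzx hzy
  exact h ((comp_eq_of_mem hr hzx).symm.trans (comp_eq_of_mem hr hzy))

/-- within a component, reachability restricted to the component holds -/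
lemma reach_comp (hr : ∀ x y, r x y → r y x) {x y : α} (hx : x ∈ S)
    (h : reach r S x y) : reach r (comp r S x) x y := by
  induction h with
  | refl => exact Relation.ReflTransGen.refl
  | @tail b c hxb hstep ih =>
      have hb : b ∈ comp r S x := mem_comp.2 ⟨hstep.1, hxb⟩
      have hc : c ∈ comp r S x := mem_comp.2 ⟨hstep.2.1, hxb.tail hstep⟩
      exact ih.tail ⟨hb, hc, hstep.2.2⟩

lemma reach_in_comp (hr : ∀ x y, r x y → r y x) {x a b : α}
    (ha : a ∈ comp r S x) (hb : b ∈ comp r S x) :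
    reach r (comp r S x) a b := by
  have hx : comp r S a = comp r S x := comp_eq_of_mem hr ha
  have hb' : b ∈ comp r S a := hx ▸ hb
  have : reach r (comp r S a) a b :=
    reach_comp hr (mem_comp.1 ha).1 (mem_comp.1 hb').2
  rwa [hx] at this

/-- Bridge: reach-connectivity gives SimpleGraph connectivity of the induced graph. -/
lemma connected_of_reach (G : SimpleGraph α) (hS : S.Nonempty)
    (hsub : ∀ x y, x ∈ S → y ∈ S → r x y → G.Adj x y)
    (hconn : ∀ x ∈ S, ∀ y ∈ S, reach r S x y) :
    (SimpleGraph.induce (↑S : Set α) G).Connected := by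
  have key : ∀ a b : α, reach r S a b → ∀ (ha : a ∈ S) (hb : b ∈ S),
      (SimpleGraph.induce (↑S : Set α) G).Reachable ⟨a, ha⟩ ⟨b, hb⟩ := by
    intro a b h
    induction h with
    | refl => intro ha hb; rfl
    | @tail b c hab hstep ih =>
        intro ha hc
        have := ih ha hstep.1
        exact this.trans (SimpleGraph.Adj.reachable
          (by exact hsub _ _ hstep.1 hstep.2.1 hstep.2.2))
  rw [SimpleGraph.connected_iff]
  constructor
  · rintro ⟨a, ha⟩ ⟨b, hb⟩
    exact key a b (hconn a (by exact_mod_cast ha) b (by exact_mod_cast hb))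
      (by exact_mod_cast ha) (by exact_mod_cast hb)
  · obtain ⟨x, hx⟩ := hS
    exact ⟨⟨x, by exact_mod_cast hx⟩⟩

/-- Bridge: SimpleGraph connectivity of the induced graph gives reach-connectivity. -/
lemma reach_of_connected (G : SimpleGraph α)
    (h : (SimpleGraph.induce (↑S : Set α) G).Connected)
    (hsub : ∀ x y, x ∈ S → y ∈ S → G.Adj x y → r x y) :
    ∀ x ∈ S, ∀ y ∈ S, reach r S x y := by
  have key : ∀ (a b : (↑S : Set α)),
      (SimpleGraph.induce (↑S : Set α) G).Walk a b → reach r S a.1 b.1 := by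
    intro a b w
    induction w with
    | nil => exact Relation.ReflTransGen.refl
    | @cons a c b hadj w ih =>
        refine Relation.ReflTransGen.head ?_ ih
        exact ⟨by exact_mod_cast a.2, by exact_mod_cast c.2, hsub _ _
          (by exact_mod_cast a.2) (by exact_mod_cast c.2) hadj⟩
  intro x hx y hy
  obtain ⟨w⟩ := h.preconnected ⟨x, by exact_mod_cast hx⟩ ⟨y, by exact_mod_cast hy⟩
  exact key _ _ w

/-- escaping lemma: if `x ∈ S \ {v}` can reach `v` within `S`, then its component
in `S.erase v` (w.r.t. a weaker relation on `S.erase v`) contains an `r`-neighbor of `v`. -/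
lemma exists_escape {r2 : α → α → Prop} {v : α}
    (hcompat : ∀ x y, x ∈ S.erase v → y ∈ S.erase v → r x y → r2 x y) :
    ∀ x, x ∈ S.erase v → reach r S x v →
      ∃ y ∈ S.erase v, r y v ∧ reach r2 (S.erase v) x y := by
  intro x hx h
  induction h using Relation.ReflTransGen.head_induction_on with
  | refl => exact absurd rfl (Finset.ne_of_mem_erase hx)
  | @head a c hstep hrest ih =>
      by_cases hcv : c = v
      · exact ⟨a, hx, hcv ▸ hstep.2.2, Relation.ReflTransGen.refl⟩
      · have hc : c ∈ S.erase v := Finset.mem_erase.2 ⟨hcv, hstep.2.1⟩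
        obtain ⟨y, hy, hyv, hreach⟩ := ih hc
        exact ⟨y, hy, hyv, Relation.ReflTransGen.head
          ⟨hx, hc, hcompat _ _ hx hc hstep.2.2⟩ hreach⟩
  
/-- counting components by an injection into a neighbor set -/
lemma card_image_comp_le (hr : ∀ x y, r x y → r y x) (N : Finset α)
    (hN : ∀ x ∈ S, ∃ y ∈ N, y ∈ comp r S x) :
    (S.image (comp r S)).card ≤ N.card := by
  classical
  have hrep : ∀ Q ∈ S.image (comp r S), ∃ y, y ∈ N ∧ y ∈ Q := by
    intro Q hQ
    obtain ⟨x, hx, rfl⟩ := Finset.mem_image.1 hQ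
    obtain ⟨y, hy, hyc⟩ := hN x hx
    exact ⟨y, hy, hyc⟩
  rcases Finset.eq_empty_or_nonempty (S.image (comp r S)) with hP | ⟨Q0, hQ0⟩
  · rw [hP]; simp
  obtain ⟨y0, hy0, _⟩ := hrep Q0 hQ0
  set f : Finset α → α := fun Q => if h : ∃ y, y ∈ N ∧ y ∈ Q then h.choose else y0 with hf
  have hfN : ∀ Q ∈ S.image (comp r S), f Q ∈ N ∧ f Q ∈ Q := by
    intro Q hQ
    have h := hrep Q hQ
    simp only [hf, dif_pos h]
    exact h.choose_spec
  refine Finset.card_le_card_of_injOn f (fun Q hQ => (hfN Q hQ).1) ?_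
  intro Q1 hQ1 Q2 hQ2 hfeq
  obtain ⟨x1, hx1, rfl⟩ := Finset.mem_image.1 hQ1
  obtain ⟨x2, hx2, rfl⟩ := Finset.mem_image.1 hQ2
  have h1 := (hfN _ hQ1).2
  have h2 := (hfN _ hQ2).2
  rw [hfeq] at h1
  exact (comp_eq_of_mem hr h1).symm.trans (comp_eq_of_mem hr h2)

end BDaux


section MainAux

variable {α : Type} [DecidableEq α] {n : ℕ}

open BDaux

/-- red-degree bound as a Finset filter bound -/
lemma filter_red_card_le (C : ContractionSeq α n) {d : ℕ} (hW : C.HasWidth d)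
    (j : ℕ) (hj1 : 1 ≤ j) (hjn : j ≤ n) (x : α) (V : Finset α) :
    (V.filter (fun y => (C.seq j).red y x)).card ≤ d := by
  have hsub : (↑(V.filter (fun y => (C.seq j).red y x)) : Set α) ⊆
      {y | (C.seq j).red x y} := by
    intro y hy
    simp only [Finset.coe_filter, Set.mem_setOf_eq] at hy ⊢
    exact (C.seq j).red_symm _ _ hy.2
  have hfin : {y | (C.seq j).red x y}.Finite := by
    apply Set.Finite.subset (C.seq j).verts.finite_toSet
    intro y hy
    exact ((C.seq j).red_mem x y hy).2
  calc (V.filter (fun y => (C.seq j).red y x)).card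
      = (↑(V.filter (fun y => (C.seq j).red y x)) : Set α).ncard :=
        (Set.ncard_coe_finset _).symm
    _ ≤ {y | (C.seq j).red x y}.ncard := Set.ncard_le_ncard hsub hfin
    _ ≤ d := hW j hj1 hjn x

/-- Builder: a suitable partition of `T'` yields a `D'`-decomposition. -/
lemma build_decomp (C : ContractionSeq α n) (d k : ℕ)
    (i : ℕ) (T D D' : Finset α) (hD' : DCompat C k i T D D')
    (hT'v : newT C i T ⊆ (C.seq (i-1)).verts)
    (m : ℕ) (Tj : Fin m → Finset α)
    (h1 : ∀ j, (Tj j).Nonempty)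
    (h3 : ∀ j, (Tj j).card ≤ k * (d+1))
    (h4 : ∀ j, ∀ a ∈ Tj j, ∀ b ∈ Tj j, BDaux.reach (C.seq (i-1)).red (Tj j) a b)
    (h5 : ∀ j ℓ, j ≠ ℓ → Disjoint (Tj j) (Tj ℓ))
    (h6 : Finset.univ.biUnion Tj = newT C i T)
    (h7 : ∀ j ℓ, j ≠ ℓ → ∀ x ∈ Tj j, ∀ y ∈ D' ∩ Tj ℓ, ¬ (C.seq (i-1)).red x y) :
    IsDDecomp C k d i T D D' m Tj (fun j => D' ∩ Tj j) := by
  have hTsub : ∀ j, Tj j ⊆ newT C i T := by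
    intro j x hx
    rw [← h6]
    exact Finset.mem_biUnion.2 ⟨j, Finset.mem_univ j, hx⟩
  refine ⟨?_, h5, h6.symm, ?_, hD', ?_⟩
  · intro j
    refine ⟨fun x hx => hT'v (hTsub j hx), h3 j, ?_, Finset.inter_subset_right, ?_⟩
    · exact connected_of_reach _ (h1 j) (fun x y _ _ h => h) (h4 j)
    · exact le_trans (Finset.card_le_card Finset.inter_subset_left) hD'.2.2.1
  · ext y
    simp only [Finset.mem_biUnion, Finset.mem_univ, true_and, Finset.mem_inter]
    constructor
    · intro hy
      have : y ∈ Finset.univ.biUnion Tj := by rw [h6]; exact hD'.1 hy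
      obtain ⟨j, _, hj⟩ := Finset.mem_biUnion.1 this
      exact ⟨j, hy, hj⟩
    · rintro ⟨j, hy, _⟩
      exact hy
  · exact fun j ℓ hne x hx y hy => h7 j ℓ hne x hx y hy

end MainAux

/-- (Lemma 2.) For every basic `i`-profile `(T, D)` containing the new
vertex `v = cw i` and every `D' ⊆ T'` compatible with it, there is a `D'`-decomposition
with at most `d + 2` basic `(i-1)`-profiles. -/
theorem basic_decomposition_exists {α : Type} [DecidableEq α] {n : ℕ}
    (C : ContractionSeq α n) (d k : ℕ) (hW : C.HasWidth d)
    (i : ℕ) (h2 : 2 ≤ i) (hin : i ≤ n)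
    (T D : Finset α) (hπ : IsBasicProfile C k d i T D) (hv : C.cw i ∈ T)
    (D' : Finset α) (hD' : DCompat C k i T D D') :
    ∃ (m : ℕ) (Tj Dj : Fin m → Finset α),
      IsDDecomp C k d i T D D' m Tj Dj ∧ m ≤ d + 2 := by
  classical
  have hstep := C.step i h2 hin
  obtain ⟨hu1m, hu2m, hu12, hwm, hverts, hblk, hrd, hrest⟩ := hstep
  set G' := C.seq (i-1) with hG'
  set v := C.cw i with hvdef
  set u₁ := C.cu i with hu1def
  set u₂ := C.cv i with hu2def
  set T' := newT C i T with hT'def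
  have h1i : 1 ≤ i := le_trans (by norm_num) h2
  have h1i1 : 1 ≤ i - 1 := by omega
  have hi1n : i - 1 ≤ n := by omega
  set r' : α → α → Prop := G'.red with hr'def
  have hr'symm : ∀ x y, r' x y → r' y x := G'.red_symm
  set ri : α → α → Prop := (C.seq i).red with hridef
  have hrisymm : ∀ x y, ri x y → ri y x := (C.seq i).red_symm
  -- membership facts
  have hTsub : T ⊆ (C.seq i).verts := hπ.1
  have hvu1 : v ≠ u₁ := fun h => hwm (h.symm ▸ hu1m)
  have hvu2 : v ≠ u₂ := fun h => hwm (h.symm ▸ hu2m)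
  have hu1T : u₁ ∉ T := by
    intro h
    have := hTsub h
    rw [hverts] at this
    rcases Finset.mem_insert.1 this with h' | h'
    · exact hvu1 h'.symm
    · exact (Finset.mem_sdiff.1 h').2 (by simp)
  have hu2T : u₂ ∉ T := by
    intro h
    have := hTsub h
    rw [hverts] at this
    rcases Finset.mem_insert.1 this with h' | h'
    · exact hvu2 h'.symm
    · exact (Finset.mem_sdiff.1 h').2 (by simp)
  have hAmem : ∀ x ∈ T.erase v, x ∈ G'.verts \ ({u₁, u₂} : Finset α) := by
    intro x hx
    have hxv := Finset.ne_of_mem_erase hx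
    have := hTsub (Finset.mem_of_mem_erase hx)
    rw [hverts] at this
    rcases Finset.mem_insert.1 this with h' | h'
    · exact absurd h' hxv
    · exact h'
  have hT'union : T' = T.erase v ∪ ({u₁, u₂} : Finset α) := rfl
  have hAsub : T.erase v ⊆ T' := by
    rw [hT'union]; exact Finset.subset_union_left
  have hT'v : T' ⊆ G'.verts := by
    intro x hx
    rw [hT'union] at hx
    rcases Finset.mem_union.1 hx with hx | hx
    · exact (Finset.mem_sdiff.1 (hAmem x hx)).1
    · rcases Finset.mem_insert.1 hx with h' | h'
      · exact h' ▸ hu1m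
      · exact (Finset.mem_singleton.1 h') ▸ hu2m
  have hmemT' : ∀ x, x ∈ T' ↔ (x ∈ T.erase v ∨ x = u₁ ∨ x = u₂) := by
    intro x
    rw [hT'union, Finset.mem_union, Finset.mem_insert, Finset.mem_singleton]
  -- cardinalities
  have hTne : T.Nonempty := ⟨v, hv⟩
  have hk1 : 1 ≤ k * (d+1) := le_trans (Finset.card_pos.2 hTne) hπ.2.1
  have hcardT' : T'.card = T.card + 1 := by
    have hdisj : Disjoint (T.erase v) ({u₁, u₂} : Finset α) := by
      rw [Finset.disjoint_right]
      intro x hx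
      rcases Finset.mem_insert.1 hx with h' | h'
      · subst h'; exact fun hc => hu1T (Finset.mem_of_mem_erase hc)
      · rw [Finset.mem_singleton.1 h']
        exact fun hc => hu2T (Finset.mem_of_mem_erase hc)
    rw [hT'union, Finset.card_union_of_disjoint hdisj,
      Finset.card_erase_of_mem hv, Finset.card_pair hu12]
    have : 1 ≤ T.card := Finset.card_pos.2 hTne
    omega
  have hcardTle : T.card ≤ k * (d+1) := hπ.2.1
  -- red edges inside T.erase v descend
  have hredAA : ∀ x y, x ∈ T.erase v → y ∈ T.erase v → ri x y → r' x y := by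
    intro x y hx hy h
    exact (hrest x (hAmem x hx) y (hAmem y hy)).2.mp h
  -- Case split on component sizes in T'
  by_cases hA : ∀ x ∈ T', (BDaux.comp r' T' x).card ≤ k * (d+1)
  · -- Case A : components of T' are the parts
    set P := T'.image (BDaux.comp r' T') with hPdef
    set m := P.card with hmdef
    set Tj : Fin m → Finset α :=
      fun j => ((P.equivFin.symm j : {x // x ∈ P}) : Finset α) with hTjdef
    have hTjrep : ∀ j, ∃ x ∈ T', Tj j = BDaux.comp r' T' x := by
      intro j
      obtain ⟨x, hx, hx2⟩ := Finset.mem_image.1 (P.equivFin.symm j).2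
      exact ⟨x, hx, hx2.symm⟩
    have hTjinj : ∀ j ℓ : Fin m, j ≠ ℓ → Tj j ≠ Tj ℓ := by
      intro j ℓ hne heq
      exact hne (P.equivFin.symm.injective (Subtype.ext heq))
    refine ⟨m, Tj, fun j => D' ∩ Tj j, ?_, ?_⟩
    · apply build_decomp C d k i T D D' hD' hT'v m Tj
      · intro j
        obtain ⟨x, hx, hrep⟩ := hTjrep j
        exact ⟨x, hrep ▸ BDaux.mem_comp_self hx⟩
      · intro j
        obtain ⟨x, hx, hrep⟩ := hTjrep j
        exact hrep ▸ hA x hx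
      · intro j a ha b hb
        obtain ⟨x, hx, hrep⟩ := hTjrep j
        rw [hrep] at ha hb ⊢
        exact BDaux.reach_in_comp hr'symm ha hb
      · intro j ℓ hne
        obtain ⟨x, hx, hrx⟩ := hTjrep j
        obtain ⟨y, hy, hry⟩ := hTjrep ℓ
        rw [hrx, hry]
        exact BDaux.comp_disjoint hr'symm (by rw [← hrx, ← hry]; exact hTjinj j ℓ hne)
      · ext x
        simp only [Finset.mem_biUnion, Finset.mem_univ, true_and]
        constructor
        · rintro ⟨j, hj⟩
          obtain ⟨y, hy, hrep⟩ := hTjrep j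
          exact BDaux.comp_subset (hrep ▸ hj)
        · intro hx
          have hmem : BDaux.comp r' T' x ∈ P := Finset.mem_image_of_mem _ hx
          refine ⟨P.equivFin ⟨_, hmem⟩, ?_⟩
          have heq : Tj (P.equivFin ⟨_, hmem⟩) = BDaux.comp r' T' x := by
            simp only [hTjdef, Equiv.symm_apply_apply]
          rw [heq]
          exact BDaux.mem_comp_self hx
      · intro j ℓ hne x hx y hy hred
        obtain ⟨a, ha, hra⟩ := hTjrep j
        obtain ⟨b, hb, hrb⟩ := hTjrep ℓ
        have hy' := (Finset.mem_inter.1 hy).2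
        have hxy : y ∈ BDaux.comp r' T' x := by
          apply BDaux.step_mem_comp hr'symm
          · exact BDaux.comp_subset (hra ▸ hx)
          · exact BDaux.comp_subset (hrb ▸ hy')
          · exact hred
        have e1 : BDaux.comp r' T' x = Tj j := by
          rw [hra] at hx ⊢
          exact BDaux.comp_eq_of_mem hr'symm hx
        have e2 : BDaux.comp r' T' y = Tj ℓ := by
          rw [hrb] at hy' ⊢
          exact BDaux.comp_eq_of_mem hr'symm hy'
        have : Tj ℓ = Tj j := by
          rw [← e1, ← e2]
          exact BDaux.comp_eq_of_mem hr'symm hxy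
        exact hTjinj j ℓ hne this.symm
    · -- m ≤ d + 2
      have hreachT : ∀ x ∈ T, ∀ y ∈ T, BDaux.reach ri T x y := by
        apply BDaux.reach_of_connected (C.seq i).redGraph hπ.2.2.1
        exact fun x y _ _ h => h
      set Nv := (T.erase v).filter (fun y => ri y v) with hNvdef
      have hNvcard : Nv.card ≤ d := filter_red_card_le C hW i h1i hin v (T.erase v)
      have hcount := BDaux.card_image_comp_le (S := T') (r := r') hr'symm
        (({u₁, u₂} : Finset α) ∪ Nv) ?_
      · calc m ≤ (({u₁, u₂} : Finset α) ∪ Nv).card := hcount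
          _ ≤ ({u₁, u₂} : Finset α).card + Nv.card := Finset.card_union_le _ _
          _ ≤ 2 + d := by
              have h2' : ({u₁, u₂} : Finset α).card = 2 := Finset.card_pair hu12
              omega
          _ = d + 2 := by omega
      · intro x hx
        by_cases hc1 : u₁ ∈ BDaux.comp r' T' x
        · exact ⟨u₁, Finset.mem_union_left _ (by simp), hc1⟩
        by_cases hc2 : u₂ ∈ BDaux.comp r' T' x
        · exact ⟨u₂, Finset.mem_union_left _ (by simp), hc2⟩
        have hxA : x ∈ T.erase v := by
          rcases (hmemT' x).1 hx with h' | h' | h'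
          · exact h'
          · exact absurd (h' ▸ BDaux.mem_comp_self hx) hc1
          · exact absurd (h' ▸ BDaux.mem_comp_self hx) hc2
        have hxv : BDaux.reach ri T x v :=
          hreachT x (Finset.mem_of_mem_erase hxA) v hv
        obtain ⟨y, hy, hyv, hreach⟩ := BDaux.exists_escape hredAA x hxA hxv
        refine ⟨y, Finset.mem_union_right _ ?_, ?_⟩
        · exact Finset.mem_filter.2 ⟨hy, hyv⟩
        · exact BDaux.mem_comp.2 ⟨hAsub hy, BDaux.reach_mono hAsub hreach⟩
  · -- Case B : one huge component
    push_neg at hA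
    obtain ⟨x₀, hx₀, hbig⟩ := hA
    have hsub₀ : BDaux.comp r' T' x₀ ⊆ T' := BDaux.comp_subset
    have hcard₀ : (BDaux.comp r' T' x₀).card ≤ T'.card := Finset.card_le_card hsub₀
    have hcompeq : BDaux.comp r' T' x₀ = T' := by
      apply Finset.eq_of_subset_of_card_le hsub₀
      omega
    have hallreach : ∀ a ∈ T', ∀ b ∈ T', BDaux.reach r' T' a b := by
      intro a ha b hb
      have ha' : a ∈ BDaux.comp r' T' x₀ := hcompeq.symm ▸ ha
      have hb' : b ∈ BDaux.comp r' T' x₀ := hcompeq.symm ▸ hb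
      exact BDaux.reach_trans (BDaux.reach_symm hr'symm (BDaux.mem_comp.1 ha').2)
        (BDaux.mem_comp.1 hb').2
    have hcardT'eq : T'.card = k * (d+1) + 1 := by omega
    -- find z
    set Bad := D' ∪ D'.biUnion (fun y => T'.filter (fun x => r' x y)) with hBad
    have hBadcard : Bad.card ≤ k * (d+1) := by
      have hb1 : Bad.card ≤ D'.card +
          (D'.biUnion (fun y => T'.filter (fun x => r' x y))).card :=
        Finset.card_union_le _ _
      have hb2 : (D'.biUnion (fun y => T'.filter (fun x => r' x y))).card ≤
          ∑ y ∈ D', (T'.filter (fun x => r' x y)).card := Finset.card_biUnion_le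
      have hb3 : ∑ y ∈ D', (T'.filter (fun x => r' x y)).card ≤ D'.card * d := by
        have := Finset.sum_le_card_nsmul D' (fun y => (T'.filter (fun x => r' x y)).card) d
          (fun y _ => filter_red_card_le C hW (i-1) h1i1 hi1n y T')
        simpa using this
      have h1 : D'.card ≤ k := hD'.2.2.1
      have hb4 : D'.card * d ≤ k * d := Nat.mul_le_mul_right d h1
      have : k + k * d = k * (d+1) := by ring
      omega
    have hzex : ∃ z ∈ T', z ∉ Bad := by
      by_contra hcon
      push_neg at hcon
      have : T'.card ≤ Bad.card := Finset.card_le_card (fun x h => hcon x h)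
      omega
    obtain ⟨z, hzT', hzB⟩ := hzex
    have hzD' : z ∉ D' := fun h => hzB (Finset.mem_union_left _ h)
    have hznbr : ∀ y ∈ D', ¬ r' z y := by
      intro y hy hred
      exact hzB (Finset.mem_union_right _ (Finset.mem_biUnion.2
        ⟨y, hy, Finset.mem_filter.2 ⟨hzT', hred⟩⟩))
    set S₂ := T'.erase z with hS₂def
    have hS₂sub : S₂ ⊆ T' := Finset.erase_subset _ _
    have hzS₂ : z ∉ S₂ := Finset.notMem_erase z T'
    have hS₂card : S₂.card = k * (d+1) := by
      rw [hS₂def, Finset.card_erase_of_mem hzT', hcardT'eq]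
      omega
    set P₂ := S₂.image (BDaux.comp r' S₂) with hP₂def
    set q := P₂.card with hqdef
    set Cj : Fin q → Finset α :=
      fun j => ((P₂.equivFin.symm j : {x // x ∈ P₂}) : Finset α) with hCjdef
    have hCjrep : ∀ j, ∃ x ∈ S₂, Cj j = BDaux.comp r' S₂ x := by
      intro j
      obtain ⟨x, hx, hx2⟩ := Finset.mem_image.1 (P₂.equivFin.symm j).2
      exact ⟨x, hx, hx2.symm⟩
    have hCjinj : ∀ j ℓ : Fin q, j ≠ ℓ → Cj j ≠ Cj ℓ := by
      intro j ℓ hne heq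
      exact hne (P₂.equivFin.symm.injective (Subtype.ext heq))
    have hCjsub : ∀ j, Cj j ⊆ S₂ := by
      intro j
      obtain ⟨x, hx, hrep⟩ := hCjrep j
      exact hrep ▸ BDaux.comp_subset
    set Tj : Fin (q+1) → Finset α := Fin.snoc Cj ({z} : Finset α) with hTjdef
    have hTlast : Tj (Fin.last q) = ({z} : Finset α) := by
      rw [hTjdef]; simp
    have hTcast : ∀ j : Fin q, Tj j.castSucc = Cj j := by
      intro j; rw [hTjdef]; simp
    refine ⟨q+1, Tj, fun j => D' ∩ Tj j, ?_, ?_⟩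
    · apply build_decomp C d k i T D D' hD' hT'v (q+1) Tj
      · -- nonempty
        intro j
        rcases Fin.eq_castSucc_or_eq_last j with ⟨j', rfl⟩ | rfl
        · rw [hTcast]
          obtain ⟨x, hx, hrep⟩ := hCjrep j'
          exact ⟨x, hrep ▸ BDaux.mem_comp_self hx⟩
        · rw [hTlast]; simp
      · -- card
        intro j
        rcases Fin.eq_castSucc_or_eq_last j with ⟨j', rfl⟩ | rfl
        · rw [hTcast]
          exact le_trans (Finset.card_le_card (hCjsub j')) (le_of_eq hS₂card)
        · rw [hTlast]; simpa using hk1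
      · -- reach within part
        intro j
        rcases Fin.eq_castSucc_or_eq_last j with ⟨j', rfl⟩ | rfl
        · rw [hTcast]
          intro a ha b hb
          obtain ⟨x, hx, hrep⟩ := hCjrep j'
          rw [hrep] at ha hb ⊢
          exact BDaux.reach_in_comp hr'symm ha hb
        · rw [hTlast]
          intro a ha b hb
          rw [Finset.mem_singleton] at ha hb
          rw [ha, hb]
          exact Relation.ReflTransGen.refl
      · -- disjoint
        intro j ℓ hne
        have hdCz : ∀ j', Disjoint (Cj j') ({z} : Finset α) := by
          intro j'
          rw [Finset.disjoint_singleton_right]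
          exact fun hc => hzS₂ (hCjsub j' hc)
        rcases Fin.eq_castSucc_or_eq_last j with ⟨j', rfl⟩ | rfl <;>
          rcases Fin.eq_castSucc_or_eq_last ℓ with ⟨ℓ', rfl⟩ | rfl
        · rw [hTcast, hTcast]
          obtain ⟨a, ha, hra⟩ := hCjrep j'
          obtain ⟨b, hb, hrb⟩ := hCjrep ℓ'
          rw [hra, hrb]
          apply BDaux.comp_disjoint hr'symm
          rw [← hra, ← hrb]
          exact hCjinj j' ℓ' (fun h => hne (by rw [h]))
        · rw [hTcast, hTlast]; exact hdCz j'
        · rw [hTcast, hTlast]; exact (hdCz ℓ').symm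
        · exact absurd rfl hne
      · -- union
        ext x
        simp only [Finset.mem_biUnion, Finset.mem_univ, true_and]
        constructor
        · rintro ⟨j, hj⟩
          rcases Fin.eq_castSucc_or_eq_last j with ⟨j', rfl⟩ | rfl
          · rw [hTcast] at hj
            exact hS₂sub (hCjsub j' hj)
          · rw [hTlast, Finset.mem_singleton] at hj
            exact hj ▸ hzT'
        · intro hx
          by_cases hxz : x = z
          · exact ⟨Fin.last q, by rw [hTlast]; simp [hxz]⟩
          · have hxS₂ : x ∈ S₂ := Finset.mem_erase.2 ⟨hxz, hx⟩
            have hmem : BDaux.comp r' S₂ x ∈ P₂ := Finset.mem_image_of_mem _ hxS₂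
            refine ⟨(P₂.equivFin ⟨_, hmem⟩).castSucc, ?_⟩
            rw [hTcast]
            have heq : Cj (P₂.equivFin ⟨_, hmem⟩) = BDaux.comp r' S₂ x := by
              simp only [hCjdef, Equiv.symm_apply_apply]
            rw [heq]
            exact BDaux.mem_comp_self hxS₂
      · -- no cross red edges
        intro j ℓ hne x hx y hy hred
        have hyD' := (Finset.mem_inter.1 hy).1
        have hyT := (Finset.mem_inter.1 hy).2
        rcases Fin.eq_castSucc_or_eq_last j with ⟨j', rfl⟩ | rfl <;>
          rcases Fin.eq_castSucc_or_eq_last ℓ with ⟨ℓ', rfl⟩ | rfl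
        · rw [hTcast] at hx hyT
          obtain ⟨a, ha, hra⟩ := hCjrep j'
          obtain ⟨b, hb, hrb⟩ := hCjrep ℓ'
          have hxy : y ∈ BDaux.comp r' S₂ x := by
            apply BDaux.step_mem_comp hr'symm
            · exact BDaux.comp_subset (hra ▸ hx)
            · exact BDaux.comp_subset (hrb ▸ hyT)
            · exact hred
          have e1 : BDaux.comp r' S₂ x = Cj j' := by
            rw [hra] at hx ⊢
            exact BDaux.comp_eq_of_mem hr'symm hx
          have e2 : BDaux.comp r' S₂ y = Cj ℓ' := by
            rw [hrb] at hyT ⊢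
            exact BDaux.comp_eq_of_mem hr'symm hyT
          have : Cj ℓ' = Cj j' := by
            rw [← e1, ← e2]
            exact BDaux.comp_eq_of_mem hr'symm hxy
          exact hCjinj j' ℓ' (fun h => hne (by rw [h])) this.symm
        · rw [hTlast, Finset.mem_singleton] at hyT
          exact hzD' (hyT ▸ hyD')
        · rw [hTlast, Finset.mem_singleton] at hx
          exact hznbr y hyD' (hx ▸ hred)
        · exact hne rfl
    · -- q + 1 ≤ d + 2
      have hcount := BDaux.card_image_comp_le (S := S₂) (r := r') hr'symm
        (S₂.filter (fun y => r' y z)) ?_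
      · have hNd : (S₂.filter (fun y => r' y z)).card ≤ d :=
          filter_red_card_le C hW (i-1) h1i1 hi1n z S₂
        have hqd : q ≤ d := by
          calc q = (S₂.image (BDaux.comp r' S₂)).card := by rw [hqdef, hP₂def]
            _ ≤ (S₂.filter (fun y => r' y z)).card := hcount
            _ ≤ d := hNd
        omega
      · intro x hx
        have hxz : BDaux.reach r' T' x z := hallreach x (hS₂sub hx) z hzT'
        obtain ⟨y, hy, hyz, hreach⟩ :=
          BDaux.exists_escape (fun a b _ _ h => h) x hx hxz
        exact ⟨y, Finset.mem_filter.2 ⟨hy, hyz⟩, BDaux.mem_comp.2 ⟨hy, hreach⟩⟩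
end

section
/- Let G be a graph with a contraction sequence (G = G_1, ..., G_n) of width d and let k be a natural number. Let i in [2, n], let v be the unique vertex of V(G_i) \ V(G_{i-1}), let u_1, u_2 be the two vertices of V(G_{i-1}) \ V(G_i) contracted into v, let π = (T, D, M, f) be an extended i-profile with v in T, let T' = (T \ {v}) ∪ {u_1, u_2}, and let f': T' → {0, ..., k} be a function compatible with π. Then there exists an f'-decomposition of π with cardinality at most d + 2. -/
attribute [local instance 10] Classical.propDecidable

variable {α : Type} [DecidableEq α]

variable {n : ℕ}

set_option linter.unusedSectionVars false

namespace RWHelp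

variable {α : Type} [DecidableEq α]

/-- Reachability by a walk whose support stays in `S`. -/
def ReachIn (R : SimpleGraph α) (S : Finset α) (x y : α) : Prop :=
  ∃ w : R.Walk x y, ∀ z ∈ w.support, z ∈ S

variable {R R' : SimpleGraph α} {S S' : Finset α} {x y z : α}

lemma ReachIn.left_mem (h : ReachIn R S x y) : x ∈ S := by
  obtain ⟨w, hw⟩ := h; exact hw x w.start_mem_support

lemma ReachIn.right_mem (h : ReachIn R S x y) : y ∈ S := by
  obtain ⟨w, hw⟩ := h; exact hw y w.end_mem_support

lemma ReachIn.refl (hx : x ∈ S) : ReachIn R S x x :=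
  ⟨SimpleGraph.Walk.nil, by simp [hx]⟩

lemma ReachIn.symm (h : ReachIn R S x y) : ReachIn R S y x := by
  obtain ⟨w, hw⟩ := h
  exact ⟨w.reverse, by simpa [SimpleGraph.Walk.support_reverse] using hw⟩

lemma ReachIn.trans (h : ReachIn R S x y) (h' : ReachIn R S y z) : ReachIn R S x z := by
  obtain ⟨w, hw⟩ := h
  obtain ⟨w', hw'⟩ := h'
  refine ⟨w.append w', fun a ha => ?_⟩
  rw [SimpleGraph.Walk.support_append, List.mem_append] at ha
  rcases ha with ha | ha
  · exact hw a ha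
  · exact hw' a (List.mem_of_mem_tail ha)

lemma ReachIn.mono (hS : S ⊆ S') (h : ReachIn R S x y) : ReachIn R S' x y := by
  obtain ⟨w, hw⟩ := h; exact ⟨w, fun a ha => hS (hw a ha)⟩

lemma ReachIn.step (hadj : R.Adj x y) (hx : x ∈ S) (hy : y ∈ S) : ReachIn R S x y :=
  ⟨SimpleGraph.Walk.cons hadj SimpleGraph.Walk.nil, by
    intro a ha
    simp only [SimpleGraph.Walk.support_cons, SimpleGraph.Walk.support_nil,
      List.mem_cons, List.mem_singleton] at ha
    rcases ha with rfl | rfl | h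
    · exact hx
    · exact hy
    · exact absurd h List.not_mem_nil⟩

/-- Transfer `ReachIn` between graphs agreeing on `S`. -/
lemma ReachIn.congr (hag : ∀ a ∈ S, ∀ b ∈ S, R.Adj a b → R'.Adj a b)
    (h : ReachIn R S x y) : ReachIn R' S x y := by
  obtain ⟨w, hw⟩ := h
  induction w with
  | nil => exact ReachIn.refl (hw _ (SimpleGraph.Walk.start_mem_support _))
  | @cons a b c hadj p ih =>
    have hsup : ∀ z ∈ p.support, z ∈ S := fun z hz =>
      hw z (by rw [SimpleGraph.Walk.support_cons]; exact List.mem_cons_of_mem _ hz)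
    have ha : a ∈ S := hw a (SimpleGraph.Walk.start_mem_support _)
    have hb : b ∈ S := hsup b (SimpleGraph.Walk.start_mem_support _)
    exact (ReachIn.step (hag a ha b hb hadj) ha hb).trans (ih hsup)

/-- Every vertex on an `S`-walk is `ReachIn`-reachable from the start. -/
lemma ReachIn.of_mem_support (w : R.Walk x y) (hw : ∀ a ∈ w.support, a ∈ S) :
    ∀ c ∈ w.support, ReachIn R S x c := by
  induction w with
  | nil =>
    intro c hc
    simp only [SimpleGraph.Walk.support_nil, List.mem_singleton] at hc
    subst hc
    exact ReachIn.refl (hw _ (SimpleGraph.Walk.start_mem_support _))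
  | @cons a b c' hadj p ih =>
    intro c hc
    have hsup : ∀ z ∈ p.support, z ∈ S := fun z hz =>
      hw z (by rw [SimpleGraph.Walk.support_cons]; exact List.mem_cons_of_mem _ hz)
    have ha : a ∈ S := hw a (SimpleGraph.Walk.start_mem_support _)
    have hb : b ∈ S := hsup b (SimpleGraph.Walk.start_mem_support _)
    rw [SimpleGraph.Walk.support_cons, List.mem_cons] at hc
    rcases hc with rfl | hc
    · exact ReachIn.refl ha
    · exact (ReachIn.step hadj ha hb).trans (ih hsup c hc)

/-- Truncating a walk to `z` just before `z`. -/
lemma exists_adj_of_walk {x z : α} (w : R.Walk x z) :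
    x ≠ z → (∀ a ∈ w.support, a ∈ S) →
    ∃ y, ReachIn R (S.erase z) x y ∧ R.Adj y z := by
  induction w with
  | nil => exact fun hxz _ => absurd rfl hxz
  | @cons a b c hadj p ih =>
    intro hxz hw
    have hsup : ∀ u ∈ p.support, u ∈ S := fun u hu =>
      hw u (by rw [SimpleGraph.Walk.support_cons]; exact List.mem_cons_of_mem _ hu)
    have ha : a ∈ S := hw a (SimpleGraph.Walk.start_mem_support _)
    have hb : b ∈ S := hsup b (SimpleGraph.Walk.start_mem_support _)
    by_cases hbz : b = c
    · subst hbz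
      exact ⟨a, ReachIn.refl (Finset.mem_erase.2 ⟨hxz, ha⟩), hadj⟩
    · obtain ⟨y, hy, hyadj⟩ := ih hbz hsup
      exact ⟨y, (ReachIn.step hadj (Finset.mem_erase.2 ⟨hxz, ha⟩)
        (Finset.mem_erase.2 ⟨hbz, hb⟩)).trans hy, hyadj⟩

/-- Connectivity of an induced subgraph from in-set reachability. -/
lemma induce_reachable_of_reachIn {P : Finset α}
    (w : R.Walk x y) (hw : ∀ z ∈ w.support, z ∈ P) :
    (R.induce (↑P : Set α)).Reachable
      ⟨x, by exact_mod_cast hw x w.start_mem_support⟩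
      ⟨y, by exact_mod_cast hw y w.end_mem_support⟩ := by
  induction w with
  | nil => rfl
  | @cons a b c hadj p ih =>
    have hsup : ∀ z ∈ p.support, z ∈ P := fun z hz =>
      hw z (by rw [SimpleGraph.Walk.support_cons]; exact List.mem_cons_of_mem _ hz)
    have ha : a ∈ P := hw a (SimpleGraph.Walk.start_mem_support _)
    have hb : b ∈ P := hsup b (SimpleGraph.Walk.start_mem_support _)
    have hstep : (R.induce (↑P : Set α)).Adj ⟨a, by exact_mod_cast ha⟩ ⟨b, by exact_mod_cast hb⟩ :=
      hadj
    exact hstep.reachable.trans (ih hsup)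

lemma reachIn_of_induce_reachable {P : Finset α} {a b : (↑P : Set α)}
    (h : (R.induce (↑P : Set α)).Reachable a b) : ReachIn R P ↑a ↑b := by
  obtain ⟨w⟩ := h
  induction w with
  | @nil u => exact ReachIn.refl (by exact_mod_cast u.2)
  | @cons u v c hadj p ih =>
    have hadj' : R.Adj ↑u ↑v := hadj
    exact (ReachIn.step hadj' (by exact_mod_cast u.2) (by exact_mod_cast v.2)).trans ih

/-- The reachability class of `x` within `S`. -/
noncomputable def cls (R : SimpleGraph α) (S : Finset α) (x : α) : Finset α :=
  S.filter (ReachIn R S x)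

lemma mem_cls : y ∈ cls R S x ↔ y ∈ S ∧ ReachIn R S x y := Finset.mem_filter

lemma self_mem_cls (hx : x ∈ S) : x ∈ cls R S x := mem_cls.2 ⟨hx, ReachIn.refl hx⟩

lemma cls_subset : cls R S x ⊆ S := Finset.filter_subset _ _

lemma cls_eq_of (h : ReachIn R S x y) : cls R S x = cls R S y := by
  ext a
  simp only [mem_cls]
  exact ⟨fun ⟨ha, hr⟩ => ⟨ha, h.symm.trans hr⟩, fun ⟨ha, hr⟩ => ⟨ha, h.trans hr⟩⟩

lemma cls_connected (hx : x ∈ S) :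
    (R.induce (↑(cls R S x) : Set α)).Connected := by
  rw [SimpleGraph.connected_iff]
  constructor
  · rintro ⟨a, ha⟩ ⟨b, hb⟩
    have ha' : a ∈ cls R S x := by exact_mod_cast ha
    have hb' : b ∈ cls R S x := by exact_mod_cast hb
    have hab : ReachIn R S a b := ((mem_cls.1 ha').2).symm.trans (mem_cls.1 hb').2
    obtain ⟨w, hw⟩ := hab
    have hwcls : ∀ z ∈ w.support, z ∈ cls R S x := fun z hz =>
      mem_cls.2 ⟨hw z hz, (mem_cls.1 ha').2.trans (ReachIn.of_mem_support w hw z hz)⟩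
    exact induce_reachable_of_reachIn w hwcls
  · exact ⟨⟨x, by exact_mod_cast self_mem_cls hx⟩⟩

lemma cls_no_adj (hne : cls R S x ≠ cls R S y)
    (ha : a ∈ cls R S x) (hb : b ∈ cls R S y) : ¬ R.Adj a b := by
  intro hadj
  have h1 := (mem_cls.1 ha)
  have h2 := (mem_cls.1 hb)
  exact hne ((cls_eq_of h1.2).trans ((cls_eq_of (ReachIn.step hadj h1.1 h2.1)).trans
    (cls_eq_of h2.2).symm))

/-- The partition of `S` into reachability classes, with a bound on the number of classes. -/
lemma partition_exists (R : SimpleGraph α) (S N : Finset α)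
    (hcov : ∀ x ∈ S, ∃ y, ReachIn R S x y ∧ y ∈ N) :
    ∃ (m : ℕ) (P : Fin m → Finset α),
      m ≤ N.card ∧
      (∀ j, ∃ x ∈ S, P j = cls R S x) ∧
      (∀ j l, j ≠ l → Disjoint (P j) (P l)) ∧
      Finset.univ.biUnion P = S := by
  classical
  set CL : Finset (Finset α) := S.image (cls R S) with hCL
  refine ⟨CL.card, fun j => ↑(CL.equivFin.symm j), ?_, ?_, ?_, ?_⟩
  · have hsurj : Set.SurjOn (cls R S) (↑(N ∩ S) : Set α) (↑CL : Set (Finset α)) := by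
      intro c hc
      have hc' : c ∈ CL := hc
      obtain ⟨x, hxS, rfl⟩ := Finset.mem_image.1 hc'
      obtain ⟨y, hr, hyN⟩ := hcov x hxS
      exact ⟨y, Finset.mem_coe.2 (Finset.mem_inter.2 ⟨hyN, hr.right_mem⟩), (cls_eq_of hr).symm⟩
    calc CL.card ≤ (N ∩ S).card := Finset.card_le_card_of_surjOn _ hsurj
      _ ≤ N.card := Finset.card_le_card Finset.inter_subset_left
  · intro j
    obtain ⟨x, hx, he⟩ := Finset.mem_image.1 (CL.equivFin.symm j).2
    exact ⟨x, hx, he.symm⟩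
  · intro j l hjl
    have hne : (↑(CL.equivFin.symm j) : Finset α) ≠ ↑(CL.equivFin.symm l) := by
      intro h
      exact hjl (CL.equivFin.symm.injective (Subtype.ext h))
    rw [Finset.disjoint_left]
    intro a haj hal
    obtain ⟨x, hx, hex⟩ := Finset.mem_image.1 (CL.equivFin.symm j).2
    obtain ⟨y, hy, hey⟩ := Finset.mem_image.1 (CL.equivFin.symm l).2
    have haj' : a ∈ cls R S x := by rw [hex]; exact haj
    have hal' : a ∈ cls R S y := by rw [hey]; exact hal
    apply hne
    rw [← hex, ← hey]
    exact (cls_eq_of (mem_cls.1 haj').2).trans (cls_eq_of (mem_cls.1 hal').2).symm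
  · ext a
    simp only [Finset.mem_biUnion, Finset.mem_univ, true_and]
    constructor
    · rintro ⟨j, hj⟩
      obtain ⟨x, hx, he⟩ := Finset.mem_image.1 (CL.equivFin.symm j).2
      have : a ∈ cls R S x := by rw [he]; exact hj
      exact cls_subset this
    · intro ha
      have hmem : cls R S a ∈ CL := Finset.mem_image_of_mem _ ha
      refine ⟨CL.equivFin ⟨cls R S a, hmem⟩, ?_⟩
      show a ∈ (↑(CL.equivFin.symm (CL.equivFin ⟨cls R S a, hmem⟩)) : Finset α)
      rw [Equiv.symm_apply_apply]
      exact self_mem_cls ha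

end RWHelp


section AssembleSec

variable {α : Type} [DecidableEq α] {n : ℕ}

private lemma red_finset_card_le {d : ℕ} (G : Trigraph α) (x : α) (F : Finset α)
    (hF : ∀ y ∈ F, G.red x y) (hd : G.redDegree x ≤ d) : F.card ≤ d := by
  have hfin : {y | G.red x y}.Finite :=
    Set.Finite.subset (G.verts.finite_toSet) (fun y hy => (G.red_mem x y hy).2)
  calc F.card = (↑F : Set α).ncard := (Set.ncard_coe_finset F).symm
    _ ≤ Set.ncard {y | G.red x y} :=
        Set.ncard_le_ncard (fun y hy => hF y (Finset.mem_coe.1 hy)) hfin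
    _ ≤ d := hd

private lemma singleton_connected (R : SimpleGraph α) (x : α) :
    (SimpleGraph.induce (↑({x} : Finset α) : Set α) R).Connected := by
  rw [SimpleGraph.connected_iff]
  refine ⟨fun a b => ?_, ⟨⟨x, by simp⟩⟩⟩
  have ha : (a : α) = x := by have := a.2; simpa using this
  have hb : (b : α) = x := by have := b.2; simpa using this
  have : a = b := Subtype.ext (ha.trans hb.symm)
  rw [this]

private lemma assemble (C : ContractionSeq α n) (d k : ℕ)
    (i : ℕ) (h2 : 2 ≤ i) (hin : i ≤ n)
    (T D M : Finset α) (f : α → ℕ) (hπ : IsExtProfile C k d i T D M f)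
    (hv : C.cw i ∈ T)
    (f' : α → ℕ) (hf' : FCompat C k i T f f')
    (m : ℕ) (P : Fin m → Finset α)
    (hconn : ∀ j, (SimpleGraph.induce (↑(P j) : Set α) (C.seq (i-1)).redGraph).Connected)
    (hcard : ∀ j, (P j).card ≤ k * (d+1))
    (hdisj : ∀ j l, j ≠ l → Disjoint (P j) (P l))
    (hunion : Finset.univ.biUnion P = newT C i T)
    (hcross : ∀ j l, j ≠ l → ∀ x ∈ P j, ∀ y ∈ P l, y ∈ Dset C i T f' →
      ¬ (C.seq (i-1)).red x y) :
    IsFDecomp C k d i T D M f' m (fun j => P j)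
      (fun j => P j ∩ Dset C i T f') (fun j => P j ∩ Mset C i M (Dset C i T f'))
      (fun j u => if u ∈ P j then f' u else 0) := by
  classical
  obtain ⟨hu1p, hu2p, hu12, hvp, hverts, -, -, -⟩ := C.step i h2 hin
  have hTsub : T ⊆ (C.seq i).verts := hπ.1.1
  have hvu1 : C.cw i ≠ C.cu i := fun h => hvp (h ▸ hu1p)
  have hvu2 : C.cw i ≠ C.cv i := fun h => hvp (h ▸ hu2p)
  have hu1c : C.cu i ∉ (C.seq i).verts := by
    intro hmem
    rw [hverts] at hmem
    rcases Finset.mem_insert.1 hmem with h | h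
    · exact hvu1 h.symm
    · exact (Finset.mem_sdiff.1 h).2 (Finset.mem_insert_self _ _)
  have hu2c : C.cv i ∉ (C.seq i).verts := by
    intro hmem
    rw [hverts] at hmem
    rcases Finset.mem_insert.1 hmem with h | h
    · exact hvu2 h.symm
    · exact (Finset.mem_sdiff.1 h).2
        (Finset.mem_insert_of_mem (Finset.mem_singleton_self _))
  have hu1T : C.cu i ∉ T := fun h => hu1c (hTsub h)
  have hu2T : C.cv i ∉ T := fun h => hu2c (hTsub h)
  have hT'eq : newT C i T = T.erase (C.cw i) ∪ {C.cu i, C.cv i} := rfl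
  have herase_sub : ∀ x ∈ T.erase (C.cw i),
      x ∈ (C.seq (i-1)).verts \ ({C.cu i, C.cv i} : Finset α) := by
    intro x hx
    obtain ⟨hxv, hxT⟩ := Finset.mem_erase.1 hx
    have hxc := hTsub hxT
    rw [hverts] at hxc
    rcases Finset.mem_insert.1 hxc with h | h
    · exact absurd h hxv
    · exact h
  have hT'sub : newT C i T ⊆ (C.seq (i-1)).verts := by
    intro x hx
    rw [hT'eq] at hx
    rcases Finset.mem_union.1 hx with h | h
    · exact (Finset.mem_sdiff.1 (herase_sub x h)).1
    · rcases Finset.mem_insert.1 h with rfl | h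
      · exact hu1p
      · rw [Finset.mem_singleton.1 h]; exact hu2p
  have hu1T' : C.cu i ∈ newT C i T := by
    rw [hT'eq]; exact Finset.mem_union_right _ (Finset.mem_insert_self _ _)
  have hu2T' : C.cv i ∈ newT C i T := by
    rw [hT'eq]
    exact Finset.mem_union_right _ (Finset.mem_insert_of_mem (Finset.mem_singleton_self _))
  have hdTu : Disjoint (T.erase (C.cw i)) ({C.cu i, C.cv i} : Finset α) := by
    rw [Finset.disjoint_right]
    intro a ha
    rcases Finset.mem_insert.1 ha with rfl | ha
    · exact fun h => hu1T (Finset.mem_of_mem_erase h)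
    · rw [Finset.mem_singleton.1 ha]
      exact fun h => hu2T (Finset.mem_of_mem_erase h)
  have hPsub : ∀ j, P j ⊆ newT C i T := by
    intro j x hx
    rw [← hunion]
    exact Finset.mem_biUnion.2 ⟨j, Finset.mem_univ _, hx⟩
  have hsumT' : ∑ u ∈ newT C i T, f' u = ∑ u ∈ T, f u := by
    rw [hT'eq, Finset.sum_union hdTu, Finset.sum_pair hu12]
    rw [Finset.sum_congr rfl (fun u hu => hf'.2.2.2.2.2 u hu), ← hf'.2.2.1]
    exact Finset.sum_erase_add T f hv
  have hsum_le : ∑ u ∈ newT C i T, f' u ≤ k := by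
    rw [hsumT']; exact hπ.2.2.2.2.1
  have hD'sub : Dset C i T f' ⊆ newT C i T := Finset.filter_subset _ _
  have hD'card : (Dset C i T f').card ≤ k := by
    have h1 : (Dset C i T f').card ≤ ∑ u ∈ Dset C i T f', f' u := by
      calc (Dset C i T f').card = ∑ _u ∈ Dset C i T f', 1 := by simp
        _ ≤ ∑ u ∈ Dset C i T f', f' u := Finset.sum_le_sum (fun u hu => by
            have hu' := hu
            simp only [Dset, Finset.mem_filter] at hu'
            exact Nat.one_le_iff_ne_zero.2 hu'.2)
    exact h1.trans ((Finset.sum_le_sum_of_subset hD'sub).trans hsum_le)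
  have hbag : ∀ x, x ≠ C.cw i → C.bag i x = C.bag (i-1) x := by
    intro x hx
    obtain ⟨j, rfl⟩ : ∃ j, i = j + 2 := ⟨i - 2, by omega⟩
    have h21 : j + 2 - 1 = j + 1 := by omega
    rw [h21]
    show C.bag (j + 2) x = C.bag (j + 1) x
    simp [ContractionSeq.bag, hx]
  have hvD : C.cw i ∈ D ↔ f (C.cw i) ≠ 0 := by
    rw [hπ.2.2.2.2.2.2]
    simp [Finset.mem_filter, hv]
  have hu1D' : C.cu i ∈ Dset C i T f' ↔ f' (C.cu i) ≠ 0 := by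
    simp only [Dset, Finset.mem_filter]
    exact ⟨fun h => h.2, fun h => ⟨hu1T', h⟩⟩
  have hu2D' : C.cv i ∈ Dset C i T f' ↔ f' (C.cv i) ≠ 0 := by
    simp only [Dset, Finset.mem_filter]
    exact ⟨fun h => h.2, fun h => ⟨hu2T', h⟩⟩
  have hDC : DCompat C k i T D (Dset C i T f') := by
    refine ⟨hD'sub, ?_, hD'card, ?_⟩
    · ext x
      simp only [Finset.mem_erase, hπ.2.2.2.2.2.2, Finset.mem_filter]
      constructor
      · rintro ⟨hxv, hxT, hfx⟩
        have hxe : x ∈ T.erase (C.cw i) := Finset.mem_erase.2 ⟨hxv, hxT⟩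
        have hx1 : x ≠ C.cu i := fun h => hu1T (h ▸ hxT)
        have hx2 : x ≠ C.cv i := fun h => hu2T (h ▸ hxT)
        refine ⟨hx2, hx1, ?_⟩
        simp only [Dset, Finset.mem_filter]
        refine ⟨by rw [hT'eq]; exact Finset.mem_union_left _ hxe, ?_⟩
        rw [hf'.2.2.2.2.2 x hxe]; exact hfx
      · rintro ⟨hx2, hx1, hxD'⟩
        simp only [Dset, Finset.mem_filter] at hxD'
        obtain ⟨hxT', hfx⟩ := hxD'
        have hxe : x ∈ T.erase (C.cw i) := by
          rw [hT'eq] at hxT'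
          rcases Finset.mem_union.1 hxT' with h | h
          · exact h
          · rcases Finset.mem_insert.1 h with rfl | h
            · exact absurd rfl hx1
            · exact absurd (Finset.mem_singleton.1 h) hx2
        obtain ⟨hxv, hxT⟩ := Finset.mem_erase.1 hxe
        refine ⟨hxv, hxT, ?_⟩
        rw [← hf'.2.2.2.2.2 x hxe]; exact hfx
    · rw [hvD, hu1D', hu2D', hf'.2.2.1]
      omega
  have hbasic : ∀ j, IsBasicProfile C k d (i-1) (P j) (P j ∩ Dset C i T f') := by
    intro j
    refine ⟨fun x hx => hT'sub (hPsub j hx), hcard j, hconn j, Finset.inter_subset_left, ?_⟩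
    exact le_trans (Finset.card_le_card Finset.inter_subset_right) hD'card
  have hDun : Dset C i T f' = Finset.univ.biUnion (fun j => P j ∩ Dset C i T f') := by
    ext x
    simp only [Finset.mem_biUnion, Finset.mem_univ, true_and, Finset.mem_inter]
    constructor
    · intro hx
      have hxT' : x ∈ newT C i T := hD'sub hx
      rw [← hunion] at hxT'
      obtain ⟨j, -, hj⟩ := Finset.mem_biUnion.1 hxT'
      exact ⟨j, hj, hx⟩
    · rintro ⟨j, -, hx⟩; exact hx
  have hMhat_sub : Mhat C i M ⊆ newT C i T := by
    simp only [Mhat]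
    split_ifs with hvM
    · rw [hT'eq]
      exact Finset.union_subset_union (Finset.erase_subset_erase _ hπ.2.1) (le_refl _)
    · rw [hT'eq]
      intro x hx
      exact Finset.mem_union_left _
        (Finset.mem_erase.2 ⟨fun h => hvM (h ▸ hx), hπ.2.1 hx⟩)
  have hM'sub : Mset C i M (Dset C i T f') ⊆ newT C i T := by
    intro x hx
    simp only [Mset] at hx
    exact hMhat_sub (Finset.mem_of_mem_filter _ hx)
  have hMun : Mset C i M (Dset C i T f') =
      Finset.univ.biUnion (fun j => P j ∩ Mset C i M (Dset C i T f')) := by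
    ext x
    simp only [Finset.mem_biUnion, Finset.mem_univ, true_and, Finset.mem_inter]
    constructor
    · intro hx
      have hxT' : x ∈ newT C i T := hM'sub hx
      rw [← hunion] at hxT'
      obtain ⟨j, -, hj⟩ := Finset.mem_biUnion.1 hxT'
      exact ⟨j, hj, hx⟩
    · rintro ⟨j, -, hx⟩; exact hx
  have hext : ∀ j, IsExtProfile C k d (i-1) (P j) (P j ∩ Dset C i T f')
      (P j ∩ Mset C i M (Dset C i T f')) (fun u => if u ∈ P j then f' u else 0) := by
    intro j
    refine ⟨hbasic j, Finset.inter_subset_left, fun u hu => if_neg hu, ?_, ?_, ?_, ?_⟩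
    · intro u hu
      show (if u ∈ P j then f' u else 0) ≤ k
      rw [if_pos hu]
      exact hf'.2.1 u (hPsub j hu)
    · calc ∑ u ∈ P j, (if u ∈ P j then f' u else 0) = ∑ u ∈ P j, f' u :=
          Finset.sum_congr rfl (fun u hu => if_pos hu)
        _ ≤ ∑ u ∈ newT C i T, f' u := Finset.sum_le_sum_of_subset (hPsub j)
        _ ≤ k := hsum_le
    · intro u hu
      show (if u ∈ P j then f' u else 0) ≤ (C.bag (i-1) u).card
      rw [if_pos hu]
      have huT' := hPsub j hu
      rw [hT'eq] at huT'
      rcases Finset.mem_union.1 huT' with h | h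
      · have hune : u ≠ C.cw i := (Finset.mem_erase.1 h).1
        rw [hf'.2.2.2.2.2 u h, ← hbag u hune]
        exact hπ.2.2.2.2.2.1 u (Finset.mem_of_mem_erase h)
      · rcases Finset.mem_insert.1 h with rfl | h
        · exact hf'.2.2.2.1
        · rw [Finset.mem_singleton.1 h]
          exact hf'.2.2.2.2.1
    · ext x
      simp only [Finset.mem_inter, Finset.mem_filter, Dset]
      constructor
      · rintro ⟨hxP, hxT', hfx⟩
        exact ⟨hxP, by rw [if_pos hxP]; exact hfx⟩
      · rintro ⟨hxP, hfx⟩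
        rw [if_pos hxP] at hfx
        exact ⟨hxP, hPsub j hxP, hfx⟩
  exact ⟨hext, fun j u hu => if_pos hu, hDun, hMun, hbasic, hdisj, hunion.symm, hDun, hDC,
    fun j l hjl x hx y hy =>
      hcross j l hjl x hx y (Finset.mem_inter.1 hy).1 (Finset.mem_inter.1 hy).2⟩

end AssembleSec

/-- (Lemma 6.) For every extended `i`-profile `π = (T, D, M, f)`
containing the new vertex `v = cw i` and every `f' : T' → [0, k]` compatible with `π`,
there is an `f'`-decomposition of `π` of cardinality at most `d + 2`. -/
theorem extended_decomposition_exists {α : Type} [DecidableEq α] {n : ℕ}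
    (C : ContractionSeq α n) (d k : ℕ) (hW : C.HasWidth d)
    (i : ℕ) (h2 : 2 ≤ i) (hin : i ≤ n)
    (T D M : Finset α) (f : α → ℕ) (hπ : IsExtProfile C k d i T D M f)
    (hv : C.cw i ∈ T)
    (f' : α → ℕ) (hf' : FCompat C k i T f f') :
    ∃ (m : ℕ) (Tj Dj Mj : Fin m → Finset α) (fj : Fin m → α → ℕ),
      IsFDecomp C k d i T D M f' m Tj Dj Mj fj ∧ m ≤ d + 2 := by
  classical
  obtain ⟨hu1p, hu2p, hu12, hvp, hverts, -, -, hpres⟩ := C.step i h2 hin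
  have h1i : 1 ≤ i := by omega
  have h1i' : 1 ≤ i - 1 := by omega
  have hin' : i - 1 ≤ n := by omega
  have hTsub : T ⊆ (C.seq i).verts := hπ.1.1
  have hvu1 : C.cw i ≠ C.cu i := fun h => hvp (h ▸ hu1p)
  have hvu2 : C.cw i ≠ C.cv i := fun h => hvp (h ▸ hu2p)
  have hu1c : C.cu i ∉ (C.seq i).verts := by
    intro hmem
    rw [hverts] at hmem
    rcases Finset.mem_insert.1 hmem with h | h
    · exact hvu1 h.symm
    · exact (Finset.mem_sdiff.1 h).2 (Finset.mem_insert_self _ _)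
  have hu2c : C.cv i ∉ (C.seq i).verts := by
    intro hmem
    rw [hverts] at hmem
    rcases Finset.mem_insert.1 hmem with h | h
    · exact hvu2 h.symm
    · exact (Finset.mem_sdiff.1 h).2
        (Finset.mem_insert_of_mem (Finset.mem_singleton_self _))
  have hu1T : C.cu i ∉ T := fun h => hu1c (hTsub h)
  have hu2T : C.cv i ∉ T := fun h => hu2c (hTsub h)
  have hT'eq : newT C i T = T.erase (C.cw i) ∪ {C.cu i, C.cv i} := rfl
  have herase_sub : ∀ x ∈ T.erase (C.cw i),
      x ∈ (C.seq (i-1)).verts \ ({C.cu i, C.cv i} : Finset α) := by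
    intro x hx
    obtain ⟨hxv, hxT⟩ := Finset.mem_erase.1 hx
    have hxc := hTsub hxT
    rw [hverts] at hxc
    rcases Finset.mem_insert.1 hxc with h | h
    · exact absurd h hxv
    · exact h
  have hdTu : Disjoint (T.erase (C.cw i)) ({C.cu i, C.cv i} : Finset α) := by
    rw [Finset.disjoint_right]
    intro a ha
    rcases Finset.mem_insert.1 ha with rfl | ha
    · exact fun h => hu1T (Finset.mem_of_mem_erase h)
    · rw [Finset.mem_singleton.1 ha]
      exact fun h => hu2T (Finset.mem_of_mem_erase h)
  have hu1T' : C.cu i ∈ newT C i T := by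
    rw [hT'eq]; exact Finset.mem_union_right _ (Finset.mem_insert_self _ _)
  have hu2T' : C.cv i ∈ newT C i T := by
    rw [hT'eq]
    exact Finset.mem_union_right _ (Finset.mem_insert_of_mem (Finset.mem_singleton_self _))
  have hagree : ∀ a ∈ T.erase (C.cw i), ∀ b ∈ T.erase (C.cw i),
      (C.seq i).redGraph.Adj a b → (C.seq (i-1)).redGraph.Adj a b := by
    intro a ha b hb hab
    exact ((hpres a (herase_sub a ha) b (herase_sub b hb)).2).1 hab
  -- coverage of T' by neighbors of v together with u1, u2
  have hcov1 : ∀ x ∈ newT C i T, ∃ y,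
      RWHelp.ReachIn (C.seq (i-1)).redGraph (newT C i T) x y ∧
      y ∈ insert (C.cu i) (insert (C.cv i)
        ((newT C i T).filter (fun y => (C.seq i).red (C.cw i) y))) := by
    intro x hx
    rw [hT'eq] at hx
    rcases Finset.mem_union.1 hx with hxe | hxu
    · have hxT : x ∈ T := Finset.mem_of_mem_erase hxe
      have hxv : x ≠ C.cw i := (Finset.mem_erase.1 hxe).1
      have hreach : (SimpleGraph.induce (↑T : Set α) (C.seq i).redGraph).Reachable
          ⟨x, Finset.mem_coe.2 hxT⟩ ⟨C.cw i, Finset.mem_coe.2 hv⟩ :=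
        hπ.1.2.2.1.preconnected _ _
      have hri : RWHelp.ReachIn (C.seq i).redGraph T x (C.cw i) :=
        RWHelp.reachIn_of_induce_reachable hreach
      obtain ⟨w, hw⟩ := hri
      obtain ⟨y, hy, hyadj⟩ := RWHelp.exists_adj_of_walk w hxv hw
      have hy' : RWHelp.ReachIn (C.seq (i-1)).redGraph (T.erase (C.cw i)) x y :=
        RWHelp.ReachIn.congr hagree hy
      have hyT : y ∈ T.erase (C.cw i) := hy'.right_mem
      refine ⟨y, hy'.mono (by rw [hT'eq]; exact Finset.subset_union_left), ?_⟩
      refine Finset.mem_insert_of_mem (Finset.mem_insert_of_mem (Finset.mem_filter.2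
        ⟨by rw [hT'eq]; exact Finset.mem_union_left _ hyT, ?_⟩))
      exact (C.seq i).red_symm _ _ hyadj
    · rcases Finset.mem_insert.1 hxu with rfl | hxu
      · exact ⟨C.cu i, RWHelp.ReachIn.refl hu1T', Finset.mem_insert_self _ _⟩
      · rw [Finset.mem_singleton.1 hxu]
        exact ⟨C.cv i, RWHelp.ReachIn.refl hu2T',
          Finset.mem_insert_of_mem (Finset.mem_insert_self _ _)⟩
  have hN1 : (insert (C.cu i) (insert (C.cv i)
      ((newT C i T).filter (fun y => (C.seq i).red (C.cw i) y)))).card ≤ d + 2 := by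
    have hfil : ((newT C i T).filter (fun y => (C.seq i).red (C.cw i) y)).card ≤ d :=
      red_finset_card_le (C.seq i) (C.cw i) _
        (fun y hy => (Finset.mem_filter.1 hy).2) (hW i h1i hin (C.cw i))
    calc (insert (C.cu i) (insert (C.cv i)
        ((newT C i T).filter (fun y => (C.seq i).red (C.cw i) y)))).card
        ≤ (insert (C.cv i)
          ((newT C i T).filter (fun y => (C.seq i).red (C.cw i) y))).card + 1 :=
          Finset.card_insert_le _ _
      _ ≤ (((newT C i T).filter (fun y => (C.seq i).red (C.cw i) y)).card + 1) + 1 :=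
          Nat.add_le_add_right (Finset.card_insert_le _ _) 1
      _ ≤ d + 2 := by omega
  by_cases hcase : ∀ x ∈ newT C i T,
      (RWHelp.cls (C.seq (i-1)).redGraph (newT C i T) x).card ≤ k * (d+1)
  · -- all reachability classes are small
    obtain ⟨m, P, hm, hparts, hdisj, hunion⟩ :=
      RWHelp.partition_exists (C.seq (i-1)).redGraph (newT C i T) _ hcov1
    have hconn' : ∀ j, (SimpleGraph.induce (↑(P j) : Set α) (C.seq (i-1)).redGraph).Connected := by
      intro j
      obtain ⟨x, hx, he⟩ := hparts j
      rw [he]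
      exact RWHelp.cls_connected hx
    have hcard' : ∀ j, (P j).card ≤ k * (d+1) := by
      intro j
      obtain ⟨x, hx, he⟩ := hparts j
      rw [he]
      exact hcase x hx
    have hcross' : ∀ j l, j ≠ l → ∀ x ∈ P j, ∀ y ∈ P l, y ∈ Dset C i T f' →
        ¬ (C.seq (i-1)).red x y := by
      intro j l hjl x hx y hy _
      obtain ⟨xj, hxj, hej⟩ := hparts j
      obtain ⟨xl, hxl, hel⟩ := hparts l
      have hne : RWHelp.cls (C.seq (i-1)).redGraph (newT C i T) xj ≠
          RWHelp.cls (C.seq (i-1)).redGraph (newT C i T) xl := by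
        intro h
        have hdd := hdisj j l hjl
        rw [hej, hel, h] at hdd
        rw [disjoint_self] at hdd
        have := RWHelp.self_mem_cls (R := (C.seq (i-1)).redGraph) hxl
        rw [hdd] at this
        exact absurd this (Finset.notMem_empty _)
      have hx' : x ∈ RWHelp.cls (C.seq (i-1)).redGraph (newT C i T) xj := by
        rw [← hej]; exact hx
      have hy' : y ∈ RWHelp.cls (C.seq (i-1)).redGraph (newT C i T) xl := by
        rw [← hel]; exact hy
      exact RWHelp.cls_no_adj hne hx' hy'
    exact ⟨m, P, _, _, _,
      assemble C d k i h2 hin T D M f hπ hv f' hf' m P hconn' hcard' hdisj hunion hcross',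
      le_trans hm hN1⟩
  · -- one big class: T' is connected and has exactly k(d+1)+1 vertices
    push_neg at hcase
    obtain ⟨x1, hx1T, hbig⟩ := hcase
    have hTcard : T.card ≤ k * (d+1) := hπ.1.2.1
    have hT'card : (newT C i T).card = T.card + 1 := by
      rw [hT'eq, Finset.card_union_of_disjoint hdTu, Finset.card_erase_of_mem hv,
        Finset.card_pair hu12]
      have : 1 ≤ T.card := Finset.card_pos.2 ⟨_, hv⟩
      omega
    have hk1 : 1 ≤ k * (d+1) := le_trans (Finset.card_pos.2 ⟨_, hv⟩) hTcard
    have hclsub : RWHelp.cls (C.seq (i-1)).redGraph (newT C i T) x1 ⊆ newT C i T :=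
      RWHelp.cls_subset
    have hclcard := Finset.card_le_card hclsub
    have hclseq : RWHelp.cls (C.seq (i-1)).redGraph (newT C i T) x1 = newT C i T :=
      Finset.eq_of_subset_of_card_le hclsub (by omega)
    have hTk : (newT C i T).card = k * (d+1) + 1 := by omega
    have hall : ∀ a ∈ newT C i T, ∀ b ∈ newT C i T,
        RWHelp.ReachIn (C.seq (i-1)).redGraph (newT C i T) a b := by
      intro a ha b hb
      rw [← hclseq] at ha hb
      exact ((RWHelp.mem_cls.1 ha).2).symm.trans (RWHelp.mem_cls.1 hb).2
    -- |D'| ≤ k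
    have hsumT' : ∑ u ∈ newT C i T, f' u = ∑ u ∈ T, f u := by
      rw [hT'eq, Finset.sum_union hdTu, Finset.sum_pair hu12]
      rw [Finset.sum_congr rfl (fun u hu => hf'.2.2.2.2.2 u hu), ← hf'.2.2.1]
      exact Finset.sum_erase_add T f hv
    have hsum_le : ∑ u ∈ newT C i T, f' u ≤ k := by
      rw [hsumT']; exact hπ.2.2.2.2.1
    have hD'sub : Dset C i T f' ⊆ newT C i T := Finset.filter_subset _ _
    have hD'card : (Dset C i T f').card ≤ k := by
      have h1 : (Dset C i T f').card ≤ ∑ u ∈ Dset C i T f', f' u := by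
        calc (Dset C i T f').card = ∑ _u ∈ Dset C i T f', 1 := by simp
          _ ≤ ∑ u ∈ Dset C i T f', f' u := Finset.sum_le_sum (fun u hu => by
              have hu' := hu
              simp only [Dset, Finset.mem_filter] at hu'
              exact Nat.one_le_iff_ne_zero.2 hu'.2)
      exact h1.trans ((Finset.sum_le_sum_of_subset hD'sub).trans hsum_le)
    -- find a vertex x₀ not in the closed red neighborhood of D'
    have hbadcard : ((newT C i T).filter (fun x => x ∈ Dset C i T f' ∨
        ∃ y ∈ Dset C i T f', (C.seq (i-1)).red x y)).card ≤ k * (d+1) := by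
      have hsub : ((newT C i T).filter (fun x => x ∈ Dset C i T f' ∨
          ∃ y ∈ Dset C i T f', (C.seq (i-1)).red x y)) ⊆
          Dset C i T f' ∪ (Dset C i T f').biUnion
            (fun y => (newT C i T).filter (fun x => (C.seq (i-1)).red y x)) := by
        intro x hx
        obtain ⟨hxT', hor⟩ := Finset.mem_filter.1 hx
        rcases hor with h | ⟨y, hy, hred⟩
        · exact Finset.mem_union_left _ h
        · exact Finset.mem_union_right _ (Finset.mem_biUnion.2 ⟨y, hy,
            Finset.mem_filter.2 ⟨hxT', (C.seq (i-1)).red_symm _ _ hred⟩⟩)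
      have hred_d : ∀ y ∈ Dset C i T f',
          ((newT C i T).filter (fun x => (C.seq (i-1)).red y x)).card ≤ d := by
        intro y _
        exact red_finset_card_le (C.seq (i-1)) y _
          (fun x hx => (Finset.mem_filter.1 hx).2) (hW (i-1) h1i' hin' y)
      calc ((newT C i T).filter (fun x => x ∈ Dset C i T f' ∨
            ∃ y ∈ Dset C i T f', (C.seq (i-1)).red x y)).card
          ≤ (Dset C i T f' ∪ (Dset C i T f').biUnion
            (fun y => (newT C i T).filter (fun x => (C.seq (i-1)).red y x))).card :=
            Finset.card_le_card hsub
        _ ≤ (Dset C i T f').card + ((Dset C i T f').biUnion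
            (fun y => (newT C i T).filter (fun x => (C.seq (i-1)).red y x))).card :=
            Finset.card_union_le _ _
        _ ≤ k + ∑ y ∈ Dset C i T f',
            ((newT C i T).filter (fun x => (C.seq (i-1)).red y x)).card :=
            Nat.add_le_add hD'card Finset.card_biUnion_le
        _ ≤ k + ∑ _y ∈ Dset C i T f', d :=
            Nat.add_le_add_left (Finset.sum_le_sum hred_d) k
        _ = k + (Dset C i T f').card * d := by rw [Finset.sum_const, smul_eq_mul]
        _ ≤ k + k * d := Nat.add_le_add_left (Nat.mul_le_mul_right d hD'card) k
        _ = k * (d+1) := by ring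
    obtain ⟨x₀, hx₀T', hx₀good⟩ : ∃ x₀ ∈ newT C i T, ¬ (x₀ ∈ Dset C i T f' ∨
        ∃ y ∈ Dset C i T f', (C.seq (i-1)).red x₀ y) := by
      by_contra hcon
      push_neg at hcon
      have : newT C i T ⊆ (newT C i T).filter (fun x => x ∈ Dset C i T f' ∨
          ∃ y ∈ Dset C i T f', (C.seq (i-1)).red x y) := by
        intro x hx
        exact Finset.mem_filter.2 ⟨hx, hcon x hx⟩
      have := Finset.card_le_card this
      omega
    push_neg at hx₀good
    obtain ⟨hx₀D', hx₀nored⟩ := hx₀good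
    -- partition of T' \ {x₀}
    have hcov2 : ∀ x ∈ (newT C i T).erase x₀, ∃ y,
        RWHelp.ReachIn (C.seq (i-1)).redGraph ((newT C i T).erase x₀) x y ∧
        y ∈ ((newT C i T).erase x₀).filter (fun y => (C.seq (i-1)).red x₀ y) := by
      intro x hx
      obtain ⟨hxne, hxT'⟩ := Finset.mem_erase.1 hx
      obtain ⟨w, hw⟩ := hall x hxT' x₀ hx₀T'
      obtain ⟨y, hy, hadj⟩ := RWHelp.exists_adj_of_walk w hxne hw
      exact ⟨y, hy, Finset.mem_filter.2 ⟨hy.right_mem, (C.seq (i-1)).red_symm _ _ hadj⟩⟩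
    have hN2 : (((newT C i T).erase x₀).filter
        (fun y => (C.seq (i-1)).red x₀ y)).card ≤ d :=
      red_finset_card_le (C.seq (i-1)) x₀ _
        (fun y hy => (Finset.mem_filter.1 hy).2) (hW (i-1) h1i' hin' x₀)
    obtain ⟨m2, P2, hm2, hparts2, hdisj2, hunion2⟩ :=
      RWHelp.partition_exists (C.seq (i-1)).redGraph ((newT C i T).erase x₀) _ hcov2
    set P : Fin (m2+1) → Finset α := Fin.cons {x₀} P2 with hPdef
    have hP2sub : ∀ j2, P2 j2 ⊆ (newT C i T).erase x₀ := by
      intro j2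
      obtain ⟨x, hx, he⟩ := hparts2 j2
      rw [he]
      exact RWHelp.cls_subset
    have hconn' : ∀ j, (SimpleGraph.induce (↑(P j) : Set α) (C.seq (i-1)).redGraph).Connected := by
      intro j
      induction j using Fin.cases with
      | zero =>
        rw [hPdef, Fin.cons_zero]
        exact singleton_connected _ x₀
      | succ j2 =>
        rw [hPdef, Fin.cons_succ]
        obtain ⟨x, hx, he⟩ := hparts2 j2
        rw [he]
        exact RWHelp.cls_connected hx
    have hcard' : ∀ j, (P j).card ≤ k * (d+1) := by
      intro j
      induction j using Fin.cases with
      | zero =>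
        rw [hPdef, Fin.cons_zero, Finset.card_singleton]
        exact hk1
      | succ j2 =>
        rw [hPdef, Fin.cons_succ]
        have h1 := Finset.card_le_card (hP2sub j2)
        rw [Finset.card_erase_of_mem hx₀T'] at h1
        omega
    have hd0 : ∀ j2, Disjoint ({x₀} : Finset α) (P2 j2) := by
      intro j2
      rw [Finset.disjoint_singleton_left]
      intro hmem
      exact (Finset.mem_erase.1 (hP2sub _ hmem)).1 rfl
    have hdisj' : ∀ j l, j ≠ l → Disjoint (P j) (P l) := by
      intro j l hjl
      induction j using Fin.cases with
      | zero =>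
        induction l using Fin.cases with
        | zero => exact absurd rfl hjl
        | succ l2 =>
          rw [hPdef, Fin.cons_zero, Fin.cons_succ]
          exact hd0 l2
      | succ j2 =>
        induction l using Fin.cases with
        | zero =>
          rw [hPdef, Fin.cons_zero, Fin.cons_succ]
          exact (hd0 j2).symm
        | succ l2 =>
          rw [hPdef, Fin.cons_succ, Fin.cons_succ]
          exact hdisj2 _ _ (fun h => hjl (by rw [h]))
    have hunion' : Finset.univ.biUnion P = newT C i T := by
      ext a
      simp only [Finset.mem_biUnion, Finset.mem_univ, true_and]
      constructor
      · rintro ⟨j, hj⟩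
        induction j using Fin.cases with
        | zero =>
          rw [hPdef, Fin.cons_zero] at hj
          rw [Finset.mem_singleton.1 hj]
          exact hx₀T'
        | succ j2 =>
          rw [hPdef, Fin.cons_succ] at hj
          exact Finset.mem_of_mem_erase (hP2sub _ hj)
      · intro ha
        by_cases hax : a = x₀
        · refine ⟨0, ?_⟩
          rw [hPdef, Fin.cons_zero]
          simp [hax]
        · have hmem : a ∈ (newT C i T).erase x₀ := Finset.mem_erase.2 ⟨hax, ha⟩
          rw [← hunion2] at hmem
          obtain ⟨j2, -, hj2⟩ := Finset.mem_biUnion.1 hmem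
          refine ⟨j2.succ, ?_⟩
          rw [hPdef, Fin.cons_succ]
          exact hj2
    have hcross' : ∀ j l, j ≠ l → ∀ x ∈ P j, ∀ y ∈ P l, y ∈ Dset C i T f' →
        ¬ (C.seq (i-1)).red x y := by
      intro j l hjl x hx y hy hyD'
      induction l using Fin.cases with
      | zero =>
        rw [hPdef, Fin.cons_zero] at hy
        rw [Finset.mem_singleton.1 hy] at hyD'
        exact absurd hyD' hx₀D'
      | succ l2 =>
        rw [hPdef, Fin.cons_succ] at hy
        induction j using Fin.cases with
        | zero =>
          rw [hPdef, Fin.cons_zero] at hx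
          rw [Finset.mem_singleton.1 hx]
          exact hx₀nored y hyD'
        | succ j2 =>
          rw [hPdef, Fin.cons_succ] at hx
          obtain ⟨xj, hxj, hej⟩ := hparts2 j2
          obtain ⟨xl, hxl, hel⟩ := hparts2 l2
          have hne : RWHelp.cls (C.seq (i-1)).redGraph ((newT C i T).erase x₀) xj ≠
              RWHelp.cls (C.seq (i-1)).redGraph ((newT C i T).erase x₀) xl := by
            intro h
            have hdd := hdisj2 j2 l2 (fun h' => hjl (by rw [h']))
            rw [hej, hel, h] at hdd
            rw [disjoint_self] at hdd
            have := RWHelp.self_mem_cls (R := (C.seq (i-1)).redGraph) hxl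
            rw [hdd] at this
            exact absurd this (Finset.notMem_empty _)
          have hx' : x ∈ RWHelp.cls (C.seq (i-1)).redGraph ((newT C i T).erase x₀) xj := by
            rw [← hej]; exact hx
          have hy' : y ∈ RWHelp.cls (C.seq (i-1)).redGraph ((newT C i T).erase x₀) xl := by
            rw [← hel]; exact hy
          exact RWHelp.cls_no_adj hne hx' hy'
    refine ⟨m2 + 1, P, _, _, _,
      assemble C d k i h2 hin T D M f hπ hv f' hf' (m2+1) P hconn' hcard' hdisj' hunion' hcross',
      by omega⟩
end

section
/- Let G be a graph with a contraction sequence (G = G_1, ..., G_n) of width d and let k be a natural number. Let i in [2, n], let π be an extended i-profile with v in T (where v is the new vertex of G_i), let f' be compatible with π, let {π_j : j in [m]} be an f'-decomposition of π, and let S_j be a solution of π_j for each j in [m]. Then S = ∪_{j∈[m]} S_j is a solution of π. -/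
attribute [local instance 10] Classical.propDecidable

variable {α : Type} [DecidableEq α]

variable {n : ℕ}

lemma bag_eq_of_two_le {α : Type} [DecidableEq α] {n : ℕ} (C : ContractionSeq α n)
    {i : ℕ} (h : 2 ≤ i) (x : α) :
    C.bag i x = if x = C.cw i then C.bag (i-1) (C.cu i) ∪ C.bag (i-1) (C.cv i)
      else C.bag (i-1) x := by
  obtain ⟨j, rfl⟩ : ∃ j, i = j + 2 := ⟨i - 2, by omega⟩
  simp [ContractionSeq.bag]

lemma bag_disj {α : Type} [DecidableEq α] {n : ℕ} (C : ContractionSeq α n) :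
    ∀ i, 1 ≤ i → i ≤ n → ∀ x ∈ (C.seq i).verts, ∀ y ∈ (C.seq i).verts, x ≠ y →
      Disjoint (C.bag i x) (C.bag i y) := by
  intro i h1
  induction i, h1 using Nat.le_induction with
  | base =>
    intro _ x _ y _ hxy
    simp [ContractionSeq.bag, hxy.symm, hxy]
  | succ i hi IH =>
    intro hin x hx y hy hxy
    obtain ⟨hcu, hcv, hcuv, hcw, hverts, -⟩ := C.step (i+1) (by omega) hin
    have IH' := IH (by omega)
    have hbag := fun z => bag_eq_of_two_le C (i := i+1) (by omega) z
    simp only [Nat.add_sub_cancel] at hbag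
    rw [hverts] at hx hy
    rw [hbag x, hbag y]
    rcases Finset.mem_insert.1 hx with rfl | hx'
    · rcases Finset.mem_insert.1 hy with rfl | hy'
      · exact absurd rfl hxy
      · obtain ⟨hyv, hyuv⟩ := Finset.mem_sdiff.1 hy'
        have hyw : y ≠ C.cw (i+1) := fun h => hcw (h ▸ hyv)
        rw [if_pos rfl, if_neg hyw]
        simp only [Finset.mem_insert, Finset.mem_singleton, not_or] at hyuv
        exact Finset.disjoint_union_left.2
          ⟨IH' _ hcu _ hyv (fun h => hyuv.1 h.symm),
           IH' _ hcv _ hyv (fun h => hyuv.2 h.symm)⟩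
    · obtain ⟨hxv, hxuv⟩ := Finset.mem_sdiff.1 hx'
      have hxw : x ≠ C.cw (i+1) := fun h => hcw (h ▸ hxv)
      rcases Finset.mem_insert.1 hy with rfl | hy'
      · rw [if_neg hxw, if_pos rfl]
        simp only [Finset.mem_insert, Finset.mem_singleton, not_or] at hxuv
        exact Finset.disjoint_union_right.2
          ⟨IH' _ hxv _ hcu hxuv.1, IH' _ hxv _ hcv hxuv.2⟩
      · obtain ⟨hyv, _⟩ := Finset.mem_sdiff.1 hy'
        have hyw : y ≠ C.cw (i+1) := fun h => hcw (h ▸ hyv)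
        rw [if_neg hxw, if_neg hyw]
        exact IH' _ hxv _ hyv hxy

/-- (Lemma 7.) Merging solutions of the profiles of an
`f'`-decomposition of an extended `i`-profile `π` yields a solution of `π`. -/
theorem union_of_solutions {α : Type} [DecidableEq α] {n : ℕ}
    (C : ContractionSeq α n) (d k : ℕ) (hW : C.HasWidth d)
    (i : ℕ) (h2 : 2 ≤ i) (hin : i ≤ n)
    (T D M : Finset α) (f : α → ℕ) (hπ : IsExtProfile C k d i T D M f)
    (hv : C.cw i ∈ T)
    (f' : α → ℕ) (hf' : FCompat C k i T f f')
    (m : ℕ) (Tj Dj Mj : Fin m → Finset α) (fj : Fin m → α → ℕ)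
    (hdec : IsFDecomp C k d i T D M f' m Tj Dj Mj fj)
    (Sj : Fin m → Finset α)
    (hSj : ∀ j, IsSolution C (i - 1) (Tj j) (fj j) (Sj j)) :
    IsSolution C i T f (Finset.univ.biUnion Sj) := by
  obtain ⟨hdec1, hdec2, -, -, hdd⟩ := hdec
  obtain ⟨-, hTjdisj, hTunion, -, -, -⟩ := hdd
  obtain ⟨hcu, hcv, hcuv, hcw, -, -⟩ := C.step i h2 hin
  have hbag := fun z => bag_eq_of_two_le C (i := i) h2 z
  have hTjv : ∀ j, Tj j ⊆ (C.seq (i-1)).verts := fun j => (hdec1 j).1.1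
  have hdisj := bag_disj C (i-1) (by omega) (by omega)
  -- the union solution meets the bag of x ∈ Tⱼ only in Sⱼ
  have key : ∀ j, ∀ x ∈ Tj j,
      (Finset.univ.biUnion Sj) ∩ C.bag (i-1) x = Sj j ∩ C.bag (i-1) x := by
    intro j x hx
    ext a
    simp only [Finset.mem_inter, Finset.mem_biUnion, Finset.mem_univ, true_and]
    constructor
    · rintro ⟨⟨ℓ, ha⟩, hab⟩
      refine ⟨?_, hab⟩
      rcases eq_or_ne ℓ j with rfl | hne
      · exact ha
      · exfalso
        obtain ⟨y, hy, hay⟩ := Finset.mem_biUnion.1 ((hSj ℓ).1 ha)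
        have hxy : x ≠ y := fun h =>
          Finset.disjoint_left.1 (hTjdisj ℓ j hne) hy (h ▸ hx)
        exact Finset.disjoint_left.1
          (hdisj x (hTjv j hx) y (hTjv ℓ hy) hxy) hab hay
    · rintro ⟨ha, hab⟩; exact ⟨⟨j, ha⟩, hab⟩
  have hcard : ∀ x ∈ newT C i T,
      ((Finset.univ.biUnion Sj) ∩ C.bag (i-1) x).card = f' x := by
    intro x hx
    rw [hTunion] at hx
    obtain ⟨j, -, hj⟩ := Finset.mem_biUnion.1 hx
    rw [key j x hj, ← (hSj j).2 x hj, hdec2 j x hj]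
  constructor
  · -- S ⊆ bags i T
    intro a ha
    obtain ⟨j, -, haj⟩ := Finset.mem_biUnion.1 ha
    obtain ⟨x, hx, hax⟩ := Finset.mem_biUnion.1 ((hSj j).1 haj)
    have hxT : x ∈ newT C i T := by
      rw [hTunion]; exact Finset.mem_biUnion.2 ⟨j, Finset.mem_univ j, hx⟩
    rcases Finset.mem_union.1 hxT with hxe | hxc
    · refine Finset.mem_biUnion.2 ⟨x, Finset.mem_of_mem_erase hxe, ?_⟩
      rw [hbag x, if_neg (Finset.ne_of_mem_erase hxe)]
      exact hax
    · refine Finset.mem_biUnion.2 ⟨C.cw i, hv, ?_⟩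
      rw [hbag (C.cw i), if_pos rfl]
      simp only [Finset.mem_insert, Finset.mem_singleton] at hxc
      rcases hxc with rfl | rfl
      · exact Finset.mem_union_left _ hax
      · exact Finset.mem_union_right _ hax
  · -- ∀ u ∈ T, f u = |S ∩ β(u)|
    intro u hu
    rcases eq_or_ne u (C.cw i) with rfl | huw
    · rw [hbag (C.cw i), if_pos rfl, Finset.inter_union_distrib_left,
        Finset.card_union_of_disjoint
          (Finset.disjoint_of_subset_left Finset.inter_subset_right
            (Finset.disjoint_of_subset_right Finset.inter_subset_right
              (hdisj _ hcu _ hcv hcuv)))]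
      have hcuT : C.cu i ∈ newT C i T :=
        Finset.mem_union_right _ (Finset.mem_insert_self _ _)
      have hcvT : C.cv i ∈ newT C i T :=
        Finset.mem_union_right _ (Finset.mem_insert_of_mem (Finset.mem_singleton_self _))
      rw [hcard _ hcuT, hcard _ hcvT]
      exact hf'.2.2.1
    · have huT : u ∈ newT C i T :=
        Finset.mem_union_left _ (Finset.mem_erase.2 ⟨huw, hu⟩)
      rw [hbag u, if_neg huw, hcard u huT,
        hf'.2.2.2.2.2 u (Finset.mem_erase.2 ⟨huw, hu⟩)]
end

section
/- Let G be a graph with a contraction sequence (G = G_1, ..., G_n) of width d and let k be a natural number. Let i in [2, n], let π = (T, D, M, f) be an extended i-profile with v in T (where v is the new vertex of G_i), let S be a solution of π, and define f': T' → {0, ..., k} by f'(u) = |S ∩ beta(u)|. Then f' is compatible with π, and for every f'-decomposition {(T_j, D_j, M_j, f_j) : j in [m]} of π and every j in [m], the set S ∩ beta(T_j) is a solution of (T_j, D_j, M_j, f_j). -/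
attribute [local instance 10] Classical.propDecidable

variable {α : Type} [DecidableEq α]

variable {n : ℕ}

/-- Bags of distinct vertices of `Gⱼ` are disjoint. -/
lemma bag_disjoint {α : Type} [DecidableEq α] {n : ℕ} (C : ContractionSeq α n) :
    ∀ j, j ≤ n → ∀ x ∈ (C.seq j).verts, ∀ y ∈ (C.seq j).verts, x ≠ y →
      Disjoint (C.bag j x) (C.bag j y) := by
  intro j
  induction j with
  | zero =>
    intro _ x _ y _ hxy
    simpa [ContractionSeq.bag] using hxy
  | succ m ih =>
    match m, ih with
    | 0, _ =>
      intro _ x _ y _ hxy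
      simpa [ContractionSeq.bag] using hxy
    | m + 1, ih =>
      intro hle x hx y hy hxy
      obtain ⟨hu, hv, huv, hw, hverts, -⟩ := C.step (m + 2) (by omega) hle
      rw [hverts] at hx hy
      have hm : m + 1 ≤ n := by omega
      simp only [Finset.mem_insert, Finset.mem_sdiff] at hx hy
      simp only [ContractionSeq.bag]
      rcases hx with rfl | ⟨hxV, hxuv⟩
      · rcases hy with rfl | ⟨hyV, hyuv⟩
        · exact absurd rfl hxy
        · simp only [Finset.mem_insert, Finset.mem_singleton, not_or] at hyuv
          rw [if_pos rfl, if_neg (by rintro rfl; exact hw hyV)]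
          exact Finset.disjoint_union_left.2
            ⟨ih hm _ hu _ hyV (fun h => hyuv.1 h.symm),
             ih hm _ hv _ hyV (fun h => hyuv.2 h.symm)⟩
      · simp only [Finset.mem_insert, Finset.mem_singleton, not_or] at hxuv
        rw [if_neg (by rintro rfl; exact hw hxV)]
        rcases hy with rfl | ⟨hyV, hyuv⟩
        · rw [if_pos rfl]
          exact Finset.disjoint_union_right.2
            ⟨ih hm _ hxV _ hu hxuv.1, ih hm _ hxV _ hv hxuv.2⟩
        · rw [if_neg (by rintro rfl; exact hw hyV)]
          exact ih hm _ hxV _ hyV hxy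

/-- If `S` is a solution of an extended `i`-profile `π` and
`f'(u) = |S ∩ β(u)|` on `T'` (and `0` elsewhere), then `f'` is compatible with `π`, and
for every `f'`-decomposition of `π` the sets `S ∩ β(Tⱼ)` are solutions of the
corresponding profiles. -/
theorem solution_restricts {α : Type} [DecidableEq α] {n : ℕ}
    (C : ContractionSeq α n) (d k : ℕ) (hW : C.HasWidth d)
    (i : ℕ) (h2 : 2 ≤ i) (hin : i ≤ n)
    (T D M : Finset α) (f : α → ℕ) (hπ : IsExtProfile C k d i T D M f)
    (hv : C.cw i ∈ T)
    (S : Finset α) (hS : IsSolution C i T f S)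
    (f' : α → ℕ)
    (hf'def : ∀ u, f' u =
      if u ∈ newT C i T then (S ∩ C.bag (i - 1) u).card else 0) :
    FCompat C k i T f f' ∧
    ∀ (m : ℕ) (Tj Dj Mj : Fin m → Finset α) (fj : Fin m → α → ℕ),
      IsFDecomp C k d i T D M f' m Tj Dj Mj fj →
      ∀ j, IsSolution C (i - 1) (Tj j) (fj j) (S ∩ C.bags (i - 1) (Tj j)) := by
  obtain ⟨m, rfl⟩ : ∃ m, i = m + 2 := ⟨i - 2, by omega⟩
  have hi1 : m + 2 - 1 = m + 1 := rfl
  rw [hi1] at hf'def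
  obtain ⟨hu0, hv0, huv, hw, hverts, -⟩ := C.step (m + 2) h2 hin
  have hdisj : Disjoint (C.bag (m + 1) (C.cu (m + 2))) (C.bag (m + 1) (C.cv (m + 2))) :=
    bag_disjoint C (m + 1) (by omega) _ hu0 _ hv0 huv
  have hbag_cw : C.bag (m + 2) (C.cw (m + 2)) =
      C.bag (m + 1) (C.cu (m + 2)) ∪ C.bag (m + 1) (C.cv (m + 2)) := by
    simp [ContractionSeq.bag]
  have hbag_ne : ∀ x, x ≠ C.cw (m + 2) → C.bag (m + 2) x = C.bag (m + 1) x := by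
    intro x hx
    simp [ContractionSeq.bag, hx]
  have hcuT' : C.cu (m + 2) ∈ newT C (m + 2) T := by
    simp [newT]
  have hcvT' : C.cv (m + 2) ∈ newT C (m + 2) T := by
    simp [newT]
  have hfcu : f' (C.cu (m + 2)) = (S ∩ C.bag (m + 1) (C.cu (m + 2))).card := by
    rw [hf'def, if_pos hcuT']
  have hfcv : f' (C.cv (m + 2)) = (S ∩ C.bag (m + 1) (C.cv (m + 2))).card := by
    rw [hf'def, if_pos hcvT']
  have hfcw : f (C.cw (m + 2)) =
      (S ∩ C.bag (m + 1) (C.cu (m + 2))).card + (S ∩ C.bag (m + 1) (C.cv (m + 2))).card := by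
    rw [hS.2 _ hv, hbag_cw, Finset.inter_union_distrib_left,
      Finset.card_union_of_disjoint
        (Finset.disjoint_of_subset_left Finset.inter_subset_right
          (Finset.disjoint_of_subset_right Finset.inter_subset_right hdisj))]
  have hfk : f (C.cw (m + 2)) ≤ k := hπ.2.2.2.1 _ hv
  have herase : ∀ u ∈ T.erase (C.cw (m + 2)), f' u = f u := by
    intro u hu'
    have h1 : u ∈ newT C (m + 2) T := Finset.mem_union_left _ hu'
    rw [hf'def, if_pos h1, ← hbag_ne u (Finset.ne_of_mem_erase hu'),
      ← hS.2 u (Finset.mem_of_mem_erase hu')]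
  constructor
  · refine ⟨fun u hu' => by rw [hf'def, if_neg hu'], ?_, ?_, ?_, ?_, herase⟩
    · intro u hu'
      rcases Finset.mem_union.1 hu' with h1 | h1
      · rw [herase u h1]
        exact hπ.2.2.2.1 u (Finset.mem_of_mem_erase h1)
      · simp only [Finset.mem_insert, Finset.mem_singleton] at h1
        rcases h1 with rfl | rfl
        · rw [hfcu]; omega
        · rw [hfcv]; omega
    · rw [hfcw, hfcu, hfcv]
    · rw [hfcu]
      exact Finset.card_le_card Finset.inter_subset_right
    · rw [hfcv]
      exact Finset.card_le_card Finset.inter_subset_right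
  · intro m' Tj Dj Mj fj hdec j
    obtain ⟨hprof, hfj, -, -, hDD⟩ := hdec
    refine ⟨Finset.inter_subset_right, fun u hu' => ?_⟩
    have huT' : u ∈ newT C (m + 2) T := by
      rw [hDD.2.2.1]
      exact Finset.mem_biUnion.2 ⟨j, Finset.mem_univ j, hu'⟩
    have hsub : C.bag (m + 1) u ⊆ C.bags (m + 1) (Tj j) :=
      fun x hx => Finset.mem_biUnion.2 ⟨u, hu', hx⟩
    simp only [hi1]
    rw [hfj j u hu', hf'def, if_pos huT', Finset.inter_assoc,
      Finset.inter_eq_right.2 hsub]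
end
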